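/- arXiv:1601.06158 — 6 statements merged into one kernel-verified Lean document; each statement's English description precedes it below -/
import Mathlib

section
/- The number of lattice paths from (0,0) to (n,k), with n ≥ k ≥ 0, using unit steps (1,0) and (0,1) that stay weakly below the diagonal y = x, equals the coefficient of x^k in C(x)^{n-k+1}, where C(x) = Σ_n C_n x^n is the generating function of the Catalan numbers. -/
open Finset PowerSeries

/-- Large Schröder numbers. -/
def schroeder : ℕ → ℕ
  | 0 => 1
  | n + 1 => schroeder n + ∑ i : Fin (n + 1), schroeder i * schroeder (n - i)

/-- The points visited by a path (a list of steps) starting at (0,0). -/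
def pts (l : List (ℤ × ℤ)) : List (ℤ × ℤ) :=
  l.scanl (fun p s => (p.1 + s.1, p.2 + s.2)) (0, 0)

/-- The endpoint of a path starting at (0,0). -/
def endPt (l : List (ℤ × ℤ)) : ℤ × ℤ :=
  ((l.map Prod.fst).sum, (l.map Prod.snd).sum)

/-- All steps are unit steps (1,0) or (0,1). -/
def unitSteps (l : List (ℤ × ℤ)) : Prop := ∀ s ∈ l, s = (1, 0) ∨ s = (0, 1)

/-- All steps are (1,0), (0,1) or (1,1). -/
def schSteps (l : List (ℤ × ℤ)) : Prop := ∀ s ∈ l, s = (1, 0) ∨ s = (0, 1) ∨ s = (1, 1)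

/-- The path stays weakly below the diagonal y = x. -/
def weaklyBelow (l : List (ℤ × ℤ)) : Prop := ∀ p ∈ pts l, p.2 ≤ p.1

/-- The path stays strictly below the diagonal except at its start (0,0). -/
def strictBelowAfterStart (l : List (ℤ × ℤ)) : Prop :=
  ∀ p ∈ pts l, p ≠ (0, 0) → p.2 < p.1

/-- Validity of a path starting at point `p` in a lattice where steps (1,0) and (0,1)
are allowed everywhere and the diagonal step (1,1) is allowed exactly from points
satisfying `D`. -/
def okFrom (D : ℤ × ℤ → Prop) : ℤ × ℤ → List (ℤ × ℤ) → Prop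
  | _, [] => True
  | p, s :: l => (s = (1, 0) ∨ s = (0, 1) ∨ (s = (1, 1) ∧ D p)) ∧
      okFrom D (p.1 + s.1, p.2 + s.2) l

/-- Paths from (0,0) to (n,k) in the Catalan–Schröder lattice L_CS:
diagonal steps allowed from points (a,b) with b ≥ a. -/
def LCS (n k : ℕ) : Set (List (ℤ × ℤ)) :=
  {l | okFrom (fun p => p.1 ≤ p.2) (0, 0) l ∧ endPt l = ((n : ℤ), (k : ℤ))}

/-- Paths from (0,0) to (n,k) in the lattice L*_CS:
diagonal steps allowed only from points (a,b) with b > a. -/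
def LCSstar (n k : ℕ) : Set (List (ℤ × ℤ)) :=
  {l | okFrom (fun p => p.1 < p.2) (0, 0) l ∧ endPt l = ((n : ℤ), (k : ℤ))}

/-- Weakly subdiagonal unit-step paths from (0,0) to (n,k). -/
def CPath (n k : ℕ) : Set (List (ℤ × ℤ)) :=
  {l | unitSteps l ∧ endPt l = ((n : ℤ), (k : ℤ)) ∧ weaklyBelow l}

/-- Weakly subdiagonal paths from (0,0) to (n,k) with steps (1,0),(0,1),(1,1). -/
def SPath (n k : ℕ) : Set (List (ℤ × ℤ)) :=
  {l | schSteps l ∧ endPt l = ((n : ℤ), (k : ℤ)) ∧ weaklyBelow l}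

/-- Number of paths from (0,0) to (n,n) in L_CS. -/
noncomputable def fCS (n : ℕ) : ℕ := Nat.card ↥(LCS n n)

/-- Number of paths from (0,0) to (n,n) in L*_CS. -/
noncomputable def fCSstar (n : ℕ) : ℕ := Nat.card ↥(LCSstar n n)

/-- Generating function of the Catalan numbers. -/
noncomputable def catalanGF : PowerSeries ℤ := PowerSeries.mk fun n => (catalan n : ℤ)

/-- Generating function of the large Schröder numbers. -/
noncomputable def schroederGF : PowerSeries ℤ := PowerSeries.mk fun n => (schroeder n : ℤ)

/-- Generating function F(x) of diagonal path counts in L_CS. -/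
noncomputable def FGF : PowerSeries ℤ := PowerSeries.mk fun n => (fCS n : ℤ)

/-- Generating function F*(x) of diagonal path counts in L*_CS. -/
noncomputable def FstarGF : PowerSeries ℤ := PowerSeries.mk fun n => (fCSstar n : ℤ)

/-- Substitution x ↦ x² in a formal power series: g(x²). -/
noncomputable def subSq (g : PowerSeries ℤ) : PowerSeries ℤ :=
  PowerSeries.mk fun n => if 2 ∣ n then PowerSeries.coeff (n / 2) g else 0

/-- Substitution x ↦ x³ in a formal power series: g(x³). -/
noncomputable def subCube (g : PowerSeries ℤ) : PowerSeries ℤ :=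
  PowerSeries.mk fun n => if 3 ∣ n then PowerSeries.coeff (n / 3) g else 0

lemma foldl_step (l : List (ℤ × ℤ)) (a : ℤ × ℤ) :
    l.foldl (fun p s => (p.1 + s.1, p.2 + s.2)) a
      = (a.1 + (l.map Prod.fst).sum, a.2 + (l.map Prod.snd).sum) := by
  induction l generalizing a with
  | nil => simp
  | cons s l ih => simp [ih]; constructor <;> ring

lemma scanl_concat (f : ℤ × ℤ → ℤ × ℤ → ℤ × ℤ) (l : List (ℤ × ℤ)) (s a) :
    (l ++ [s]).scanl f a = l.scanl f a ++ [f (l.foldl f a) s] := by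
  induction l generalizing a with
  | nil => simp [List.scanl]
  | cons x l ih => simp [List.scanl_cons, ih]

lemma endPt_concat (l : List (ℤ × ℤ)) (s : ℤ × ℤ) :
    endPt (l ++ [s]) = ((endPt l).1 + s.1, (endPt l).2 + s.2) := by
  simp [endPt]

lemma pts_concat (l : List (ℤ × ℤ)) (s : ℤ × ℤ) :
    pts (l ++ [s]) = pts l ++ [((endPt l).1 + s.1, (endPt l).2 + s.2)] := by
  rw [pts, scanl_concat, foldl_step]
  simp [pts, endPt]

lemma endPt_mem_pts (l : List (ℤ × ℤ)) : endPt l ∈ pts l := by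
  induction l using List.reverseRecOn with
  | nil => simp [pts, endPt, List.scanl]
  | append_singleton l s ih => rw [pts_concat, endPt_concat]; simp

lemma length_of_unitSteps (l : List (ℤ × ℤ)) (hu : unitSteps l) :
    (l.length : ℤ) = (l.map Prod.fst).sum + (l.map Prod.snd).sum := by
  induction l with
  | nil => simp
  | cons s l ih =>
    have hs := hu s (by simp)
    have ih' := ih (fun x hx => hu x (by simp [hx]))
    rcases hs with rfl | rfl <;> · push_cast; simp; linarith

lemma cpath_finite (n k : ℕ) : (CPath n k).Finite := by
  refine ((List.finite_length_le Bool (n + k)).image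
    (fun l : List Bool => l.map fun b => if b then ((1:ℤ),(0:ℤ)) else (0,1))).subset ?_
  rintro l ⟨hu, he, -⟩
  have hlen : (l.length : ℤ) = (n : ℤ) + (k : ℤ) := by
    rw [length_of_unitSteps l hu]
    simp [endPt, Prod.ext_iff] at he
    omega
  refine ⟨l.map (fun s => decide (s.1 = 1)), by simpa using by exact_mod_cast hlen.le, ?_⟩
  show List.map _ (List.map _ l) = l
  rw [List.map_map]
  conv_rhs => rw [show l = List.map id l from (List.map_id l).symm]
  apply List.map_congr_left
  intro s hs
  rcases hu s hs with rfl | rfl <;> simp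

lemma cpath_empty (n k : ℕ) (h : n < k) : CPath n k = ∅ := by
  ext l
  simp only [CPath, Set.mem_setOf_eq, Set.mem_empty_iff_false, iff_false]
  rintro ⟨hu, he, hw⟩
  have := hw _ (endPt_mem_pts l)
  rw [he] at this
  simp at this
  omega

lemma snd_sum_nonneg (l : List (ℤ × ℤ)) (hu : unitSteps l) : 0 ≤ (l.map Prod.snd).sum := by
  induction l with
  | nil => simp
  | cons s l ih =>
    have ih' := ih (fun x hx => hu x (by simp [hx]))
    rcases hu s (by simp) with rfl | rfl <;> simp <;> linarith

lemma all_horiz (l : List (ℤ × ℤ)) (hu : unitSteps l) (h0 : (l.map Prod.snd).sum = 0) :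
    l = List.replicate l.length ((1:ℤ),(0:ℤ)) := by
  induction l with
  | nil => simp
  | cons s l ih =>
    have hu' : unitSteps l := fun x hx => hu x (by simp [hx])
    have hnn := snd_sum_nonneg l hu'
    rcases hu s (by simp) with rfl | rfl
    · simp only [List.map_cons, List.sum_cons] at h0
      have h0' : (l.map Prod.snd).sum = 0 := by omega
      rw [List.length_cons, List.replicate_succ]
      exact congrArg (List.cons _) (ih hu' h0')
    · exfalso
      simp only [List.map_cons, List.sum_cons] at h0
      omega

lemma pts_replicate_below (l : List (ℤ × ℤ)) (hl : ∀ s ∈ l, s = ((1:ℤ),(0:ℤ))) :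
    weaklyBelow l := by
  intro p hp
  rw [pts] at hp
  suffices H : ∀ a : ℤ × ℤ, a.2 ≤ a.1 →
      ∀ p ∈ l.scanl (fun p s => (p.1 + s.1, p.2 + s.2)) a, p.2 ≤ p.1 by
    exact H (0,0) le_rfl p hp
  clear hp
  induction l with
  | nil => intro a ha p hp; simp [List.scanl] at hp; simpa [hp]
  | cons s l ih =>
    intro a ha p hp
    rw [List.scanl_cons] at hp
    rcases List.mem_cons.mp hp with rfl | hp
    · exact ha
    · have hs := hl s (by simp)
      refine ih (fun x hx => hl x (by simp [hx])) _ ?_ p hp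
      subst hs; simpa using by linarith

lemma cpath_zero (n : ℕ) : CPath n 0 = {List.replicate n ((1:ℤ),(0:ℤ))} := by
  ext l
  simp only [CPath, Set.mem_setOf_eq, Set.mem_singleton_iff]
  constructor
  · rintro ⟨hu, he, hw⟩
    simp only [endPt, Prod.ext_iff] at he
    obtain ⟨h1, h2⟩ := he
    have := all_horiz l hu (by exact_mod_cast h2)
    rw [this]
    congr 1
    have hlen := length_of_unitSteps l hu
    rw [h1, h2] at hlen
    exact_mod_cast hlen
  · rintro rfl
    refine ⟨fun s hs => Or.inl (List.eq_of_mem_replicate hs), ?_, ?_⟩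
    · simp [endPt, List.map_replicate, List.sum_replicate]
    · exact pts_replicate_below _ (fun s hs => List.eq_of_mem_replicate hs)

lemma cpath_decomp (n k : ℕ) (hk : k ≤ n) :
    CPath (n+1) (k+1) =
      ((· ++ [((0:ℤ),(1:ℤ))]) '' CPath (n+1) k) ∪
      ((· ++ [((1:ℤ),(0:ℤ))]) '' CPath n (k+1)) := by
  ext l
  constructor
  · rintro ⟨hu, he, hw⟩
    rcases l.eq_nil_or_concat' with rfl | ⟨l', s, rfl⟩
    · exfalso
      simp only [endPt, List.map_nil, List.sum_nil, Prod.ext_iff] at he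
      have := he.2
      omega
    have hu' : unitSteps l' := fun x hx => hu x (by simp [hx])
    have hw' : weaklyBelow l' := by
      intro p hp
      exact hw p (by rw [pts_concat]; exact List.mem_append_left _ hp)
    rw [endPt_concat, Prod.ext_iff] at he
    rcases hu s (by simp) with rfl | rfl
    · right
      refine ⟨l', ⟨hu', ?_, hw'⟩, rfl⟩
      simp only at he
      have h1 : (endPt l').1 = (n : ℤ) := by push_cast at he ⊢; omega
      have h2 : (endPt l').2 = ((k+1 : ℕ) : ℤ) := by push_cast at he ⊢; omega
      exact Prod.ext h1 h2
    · left
      refine ⟨l', ⟨hu', ?_, hw'⟩, rfl⟩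
      simp only at he
      have h1 : (endPt l').1 = ((n+1 : ℕ) : ℤ) := by push_cast at he ⊢; omega
      have h2 : (endPt l').2 = (k : ℤ) := by push_cast at he ⊢; omega
      exact Prod.ext h1 h2
  · rintro (⟨l', ⟨hu', he', hw'⟩, rfl⟩ | ⟨l', ⟨hu', he', hw'⟩, rfl⟩)
    · refine ⟨?_, ?_, ?_⟩
      · intro x hx
        rcases List.mem_append.mp hx with hx | hx
        · exact hu' x hx
        · simp at hx; simp [hx]
      · rw [endPt_concat, he']; push_cast; simp
      · intro p hp
        rw [pts_concat, he'] at hp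
        rcases List.mem_append.mp hp with hp | hp
        · exact hw' p hp
        · simp at hp; rw [hp]; push_cast; omega
    · refine ⟨?_, ?_, ?_⟩
      · intro x hx
        rcases List.mem_append.mp hx with hx | hx
        · exact hu' x hx
        · simp at hx; simp [hx]
      · rw [endPt_concat, he']; push_cast; simp
      · intro p hp
        rw [pts_concat, he'] at hp
        rcases List.mem_append.mp hp with hp | hp
        · exact hw' p hp
        · simp at hp; rw [hp]; push_cast; omega

lemma catalanGF_eq : catalanGF = 1 + X * catalanGF ^ 2 := by
  ext n
  cases n with
  | zero => simp [catalanGF]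
  | succ n =>
    rw [map_add, coeff_one, if_neg n.succ_ne_zero, pow_two, coeff_succ_X_mul, coeff_mul]
    simp only [catalanGF, coeff_mk, zero_add]
    rw [catalan_succ' n]
    push_cast
    rfl

lemma catalanGF_pow_rec (m : ℕ) :
    catalanGF ^ (m+1) = catalanGF ^ m + X * catalanGF ^ (m+2) := by
  rw [pow_succ]
  nth_rewrite 2 [catalanGF_eq]
  ring

lemma coeff_zero_pow (m : ℕ) : (coeff 0) (catalanGF ^ m) = 1 := by
  rw [coeff_zero_eq_constantCoeff, map_pow]
  simp [catalanGF]

lemma card_cpath_base (n : ℕ) :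
    (Nat.card ↥(CPath n 0) : ℤ) = coeff 0 (catalanGF ^ (n - 0 + 1)) := by
  rw [cpath_zero, coeff_zero_pow]
  simp [Nat.card_coe_set_eq]

lemma key : ∀ N n k, n + k ≤ N → k ≤ n →
    (Nat.card ↥(CPath n k) : ℤ) = coeff k (catalanGF ^ (n - k + 1)) := by
  intro N
  induction N with
  | zero =>
    intro n k h1 _
    obtain rfl : k = 0 := by omega
    exact card_cpath_base n
  | succ N ih =>
    intro n k h1 h2
    cases k with
    | zero => exact card_cpath_base n
    | succ k =>
      obtain ⟨m, rfl⟩ : ∃ m, n = k + m + 1 := ⟨n - k - 1, by omega⟩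
      have hd := cpath_decomp (k + m) k (by omega)
      have hfinA := (cpath_finite (k+m+1) k).image (· ++ [((0:ℤ),(1:ℤ))])
      have hfinB := (cpath_finite (k+m) (k+1)).image (· ++ [((1:ℤ),(0:ℤ))])
      have hdisj : Disjoint ((· ++ [((0:ℤ),(1:ℤ))]) '' CPath (k+m+1) k)
          ((· ++ [((1:ℤ),(0:ℤ))]) '' CPath (k+m) (k+1)) := by
        rw [Set.disjoint_left]
        rintro l ⟨l1, -, rfl⟩ ⟨l2, -, h⟩
        have := congrArg List.reverse h
        simp at this
      rw [Nat.card_coe_set_eq, hd, Set.ncard_union_eq hdisj hfinA hfinB,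
        Set.ncard_image_of_injective _ (List.append_left_injective _),
        Set.ncard_image_of_injective _ (List.append_left_injective _)]
      push_cast
      rw [← Nat.card_coe_set_eq, ← Nat.card_coe_set_eq]
      have e1 : k + m - k + 1 = m + 1 := by omega
      rw [e1]
      have hA : (Nat.card ↥(CPath (k+m+1) k) : ℤ) = coeff k (catalanGF ^ (m+2)) := by
        have := ih (k+m+1) k (by omega) (by omega)
        rwa [show k + m + 1 - k + 1 = m + 2 by omega] at this
      have hB : (Nat.card ↥(CPath (k+m) (k+1)) : ℤ) = coeff (k+1) (catalanGF ^ m) := by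
        cases m with
        | zero =>
          rw [cpath_empty _ _ (by omega)]
          simp [coeff_one]
        | succ m' =>
          have := ih (k+m'+1) (k+1) (by omega) (by omega)
          rwa [show k + m' + 1 - (k+1) + 1 = m' + 1 by omega] at this
      rw [hA, hB, catalanGF_pow_rec m, map_add, coeff_succ_X_mul]
      ring

/-- for n ≥ k ≥ 0, the number of weakly subdiagonal unit-step paths
from (0,0) to (n,k) equals [x^k] C(x)^(n-k+1). -/
theorem catalan_paths_count (n k : ℕ) (h : k ≤ n) :
    (Nat.card ↥(CPath n k) : ℤ) =
      PowerSeries.coeff k (catalanGF ^ (n - k + 1)) :=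
  key (n + k) n k le_rfl h
end

section
/- The formal power series S(x) = Σ_n S_n x^n of large Schröder numbers satisfies the identity x·S(x)² − (1−x)·S(x) + 1 = 0 in the ring of formal power series over the integers. -/
open Finset PowerSeries

/-- x·S(x)² − (1−x)·S(x) + 1 = 0 in ℤ[[x]]. -/
theorem schroederGF_quadratic :
    PowerSeries.X * schroederGF ^ 2 - (1 - PowerSeries.X) * schroederGF + 1 = 0 := by
  ext n
  cases n with
  | zero =>
    simp [schroederGF, schroeder]
  | succ n =>
    have hsq : (PowerSeries.coeff n) (schroederGF ^ 2)
        = ∑ i ∈ Finset.range (n + 1), (schroeder i : ℤ) * schroeder (n - i) := by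
      rw [sq, PowerSeries.coeff_mul,
        Finset.Nat.sum_antidiagonal_eq_sum_range_succ_mk]
      simp [schroederGF]
    have : (PowerSeries.coeff (n+1)) ((1 - PowerSeries.X) * schroederGF)
        = (schroeder (n+1) : ℤ) - schroeder n := by
      rw [sub_mul, one_mul, map_sub, PowerSeries.coeff_succ_X_mul]
      simp [schroederGF]
    have hrec : (schroeder (n+1) : ℤ) = schroeder n +
        ∑ i ∈ Finset.range (n + 1), (schroeder i : ℤ) * schroeder (n - i) := by
      rw [schroeder, Fin.sum_univ_eq_sum_range (fun i => schroeder i * schroeder (n - i))]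
      push_cast
      ring
    rw [map_add, map_sub, PowerSeries.coeff_succ_X_mul]
    rw [hsq, this, hrec, map_zero, PowerSeries.coeff_one, if_neg (Nat.succ_ne_zero n)]
    ring
end

section
/- In the ring of formal power series over ℤ, the generating functions C(x) of Catalan numbers and S(x) of large Schröder numbers satisfy 1/(1 − x·(C(x)+S(x)+1)) = S(x)/(1 − x·C(x)·S(x)), i.e., S(x)·(1 − x·(C(x)+S(x)+1)) = 1 − x·C(x)·S(x). -/
open Finset PowerSeries

lemma schroeder_fe : schroederGF = 1 + X * schroederGF + X * schroederGF ^ 2 := by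
  ext n
  cases n with
  | zero => simp [schroederGF, schroeder]
  | succ n =>
    rw [map_add, map_add, coeff_succ_X_mul, pow_two, coeff_succ_X_mul, coeff_one,
      if_neg (Nat.succ_ne_zero n), zero_add, coeff_mul]
    rw [Finset.Nat.sum_antidiagonal_eq_sum_range_succ_mk]
    simp only [schroederGF, coeff_mk]
    rw [schroeder]
    push_cast
    rw [Fin.sum_univ_eq_sum_range fun i => ((schroeder i : ℤ) * schroeder (n - i))]

/-- S(x)·(1 − x·(C(x)+S(x)+1)) = 1 − x·C(x)·S(x) in ℤ[[x]]. -/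
theorem gf_identity :
    schroederGF * (1 - PowerSeries.X * (catalanGF + schroederGF + 1)) =
      1 - PowerSeries.X * catalanGF * schroederGF := by
  linear_combination schroeder_fe
end

section
/- Let f*_n be the number of lattice paths from (0,0) to (n,n) in the lattice where steps (1,0) and (0,1) are allowed everywhere and steps (1,1) are allowed only from points strictly above the diagonal y = x. Then the generating function F*(x) = Σ f*_n x^n satisfies F*(x)·(1 − x·(C(x)+S(x))) = 1 in ℤ[[x]], where C(x) and S(x) are the Catalan and large Schröder generating functions. -/
open Finset PowerSeries

namespace Aux

def XS (l : List (ℤ × ℤ)) : ℤ := (l.map Prod.fst).sum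
def YS (l : List (ℤ × ℤ)) : ℤ := (l.map Prod.snd).sum
def HS (l : List (ℤ × ℤ)) : ℤ := XS l - YS l

@[simp] lemma XS_nil : XS [] = 0 := rfl
@[simp] lemma YS_nil : YS [] = 0 := rfl
@[simp] lemma HS_nil : HS [] = 0 := rfl
@[simp] lemma XS_cons (s l) : XS (s :: l) = s.1 + XS l := by simp [XS]
@[simp] lemma YS_cons (s l) : YS (s :: l) = s.2 + YS l := by simp [YS]
@[simp] lemma XS_append (l1 l2) : XS (l1 ++ l2) = XS l1 + XS l2 := by simp [XS]
@[simp] lemma YS_append (l1 l2) : YS (l1 ++ l2) = YS l1 + YS l2 := by simp [YS]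
lemma HS_append (l1 l2) : HS (l1 ++ l2) = HS l1 + HS l2 := by simp [HS]; ring
lemma HS_cons (s l) : HS (s :: l) = (s.1 - s.2) + HS l := by simp [HS]; ring

lemma endPt_eq (l) : endPt l = (XS l, YS l) := rfl
lemma endPt_append (l1 l2) : endPt (l1 ++ l2) = (XS l1 + XS l2, YS l1 + YS l2) := by
  simp [endPt_eq]

/-- step allowance systems -/
def okB (B : ℤ → ℤ × ℤ → Prop) : ℤ → List (ℤ × ℤ) → Prop
  | _, [] => True
  | h, s :: l => B h s ∧ okB B (h + (s.1 - s.2)) l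

@[simp] lemma okB_nil (B h) : okB B h [] := trivial
@[simp] lemma okB_cons (B h s l) :
    okB B h (s :: l) ↔ B h s ∧ okB B (h + (s.1 - s.2)) l := Iff.rfl

lemma okB_append (B) (l1 l2 : List (ℤ × ℤ)) (h : ℤ) :
    okB B h (l1 ++ l2) ↔ okB B h l1 ∧ okB B (h + HS l1) l2 := by
  induction l1 generalizing h with
  | nil => simp
  | cons s t ih => simp [ih, HS_cons, and_assoc, add_assoc]

def Bstar (h : ℤ) (s : ℤ × ℤ) : Prop := s = (1,0) ∨ s = (0,1) ∨ (s = (1,1) ∧ h < 0)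
def Bdy (h : ℤ) (s : ℤ × ℤ) : Prop := s = (1,0) ∨ (s = (0,1) ∧ 0 < h)
def Bsc (h : ℤ) (s : ℤ × ℤ) : Prop := (s = (1,0) ∧ h < 0) ∨ s = (0,1) ∨ s = (1,1)

def Good (B : ℤ → ℤ × ℤ → Prop) : Prop :=
  ∀ h s, B h s → s = (1,0) ∨ s = (0,1) ∨ s = (1,1)

lemma good_star : Good Bstar := by rintro h s (rfl|rfl|⟨rfl,_⟩) <;> simp
lemma good_dy : Good Bdy := by rintro h s (rfl|⟨rfl,_⟩) <;> simp
lemma good_sc : Good Bsc := by rintro h s (⟨rfl,_⟩|rfl|rfl) <;> simp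

def PB (B : ℤ → ℤ × ℤ → Prop) (n : ℕ) : Set (List (ℤ × ℤ)) :=
  {l | okB B 0 l ∧ endPt l = ((n : ℤ), (n : ℤ))}

def Seg (B : ℤ → ℤ × ℤ → Prop) (n : ℕ) : Set (List (ℤ × ℤ)) :=
  {l | okB B 0 l ∧ endPt l = ((n : ℤ), (n : ℤ)) ∧ l ≠ [] ∧
    ∀ i, 0 < i → i < l.length → HS (l.take i) ≠ 0}



lemma finite_lists (T : Set (ℤ × ℤ)) (hT : T.Finite) (L : ℕ) :
    {l : List (ℤ × ℤ) | (∀ s ∈ l, s ∈ T) ∧ l.length ≤ L}.Finite := by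
  induction L with
  | zero =>
      apply Set.Finite.subset (Set.finite_singleton ([] : List (ℤ × ℤ)))
      rintro l ⟨-, hl⟩
      simp [List.length_eq_zero_iff.mp (Nat.le_zero.mp hl)]
  | succ L ih =>
      apply Set.Finite.subset
        (Set.Finite.insert [] (Set.Finite.image (fun p : (ℤ × ℤ) × List (ℤ × ℤ) => p.1 :: p.2)
          (Set.Finite.prod hT ih)))
      rintro l ⟨hmem, hlen⟩
      cases l with
      | nil => exact Set.mem_insert _ _
      | cons s t =>
          refine Set.mem_insert_of_mem _ ⟨(s, t), ⟨hmem s (by simp), ?_, ?_⟩, rfl⟩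
          · exact fun x hx => hmem x (by simp [hx])
          · simpa using Nat.le_of_succ_le_succ hlen



lemma okB_steps {B} (hB : Good B) : ∀ (l) (h : ℤ), okB B h l →
    ∀ s ∈ l, s = (1,0) ∨ s = (0,1) ∨ s = (1,1) := by
  intro l
  induction l with
  | nil => intro h _ s hs; simp at hs
  | cons a t ih =>
      rintro h ⟨ha, ht⟩ s hs
      rcases List.mem_cons.mp hs with rfl | hs
      · exact hB h s ha
      · exact ih _ ht s hs

lemma length_le (l : List (ℤ × ℤ)) (hl : ∀ s ∈ l, s = (1,0) ∨ s = (0,1) ∨ s = (1,1)) :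
    (l.length : ℤ) ≤ XS l + YS l := by
  induction l with
  | nil => simp
  | cons a t ih =>
      have h1 : (t.length : ℤ) ≤ XS t + YS t := ih fun s hs => hl s (by simp [hs])
      have h2 : 1 ≤ a.1 + a.2 := by rcases hl a (by simp) with rfl | rfl | rfl <;> norm_num
      simp only [List.length_cons, XS_cons, YS_cons, Nat.cast_add, Nat.cast_one]
      linarith

lemma PB_finite {B} (hB : Good B) (n : ℕ) : (PB B n).Finite := by
  apply Set.Finite.subset (finite_lists {(1,0),(0,1),(1,1)} (Set.toFinite _) (2*n))
  rintro l ⟨h1, h2⟩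
  have hsteps := okB_steps hB l 0 h1
  have hxy : XS l = n ∧ YS l = n := by
    have := h2
    rw [endPt_eq] at this
    exact ⟨congrArg Prod.fst this, congrArg Prod.snd this⟩
  refine ⟨fun s hs => by rcases hsteps s hs with rfl|rfl|rfl <;> simp, ?_⟩
  have := length_le l hsteps
  rw [hxy.1, hxy.2] at this
  omega

lemma Seg_finite {B} (hB : Good B) (n : ℕ) : (Seg B n).Finite :=
  (PB_finite hB n).subset fun l hl => ⟨hl.1, hl.2.1⟩



lemma HS_take_succ_cons (s : ℤ × ℤ) (t : List (ℤ × ℤ)) (j : ℕ) :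
    HS ((s :: t).take (j + 1)) = (s.1 - s.2) + HS (t.take j) := by
  simp [List.take_succ_cons, HS_cons]

lemma okB_shift {B B' : ℤ → ℤ × ℤ → Prop} {c : ℤ} {Rg : ℤ → Prop}
    (H1 : ∀ h s, Rg h → Rg (h + (s.1 - s.2)) → (B h s ↔ B' (h + c) s))
    (H2 : ∀ h s, Rg h → B h s → Rg (h + (s.1 - s.2)))
    (H2' : ∀ h s, Rg h → Rg (h + (s.1 - s.2)) → B' (h + c) s → True) :
    ∀ (l : List (ℤ × ℤ)) (h : ℤ), Rg h →
      (okB B h l ↔ okB B' (h + c) l ∧ ∀ i ≤ l.length, Rg (h + HS (l.take i))) := by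
  intro l
  induction l with
  | nil =>
      intro h hR
      constructor
      · intro _
        refine ⟨trivial, fun i hi => ?_⟩
        obtain rfl : i = 0 := Nat.le_zero.mp hi
        simpa using hR
      · intro _; trivial
  | cons s t ih =>
      intro h hR
      constructor
      · rintro ⟨hBs, hok⟩
        have hR' : Rg (h + (s.1 - s.2)) := H2 h s hR hBs
        obtain ⟨hok', hreg⟩ := (ih _ hR').mp hok
        refine ⟨⟨(H1 h s hR hR').mp hBs, by rwa [show h + c + (s.1 - s.2) = h + (s.1 - s.2) + c by ring]⟩, ?_⟩
        intro i hi
        cases i with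
        | zero => simpa using hR
        | succ j =>
            rw [HS_take_succ_cons, ← add_assoc]
            exact hreg j (by simpa using hi)
      · rintro ⟨⟨hBs', hok'⟩, hreg⟩
        have hR' : Rg (h + (s.1 - s.2)) := by
          have := hreg 1 (by simp)
          rw [show (1 : ℕ) = 0 + 1 by rfl, HS_take_succ_cons] at this
          simpa using this
        have hBs : B h s := (H1 h s hR hR').mpr hBs'
        refine ⟨hBs, (ih _ hR').mpr ⟨by rwa [show h + (s.1 - s.2) + c = h + c + (s.1 - s.2) by ring], ?_⟩⟩
        intro j hj
        have := hreg (j + 1) (by simpa using Nat.succ_le_succ hj)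
        rwa [HS_take_succ_cons, ← add_assoc] at this

lemma shift_dy_star : ∀ (l : List (ℤ × ℤ)) (h : ℤ), 0 ≤ h →
    (okB Bdy h l ↔ okB Bstar (h + 1) l ∧ ∀ i ≤ l.length, 0 ≤ h + HS (l.take i)) := by
  apply okB_shift
  · intro h s hR hR'
    constructor
    · rintro (rfl | ⟨rfl, hh⟩)
      · exact Or.inl rfl
      · exact Or.inr (Or.inl rfl)
    · rintro (rfl | rfl | ⟨rfl, hh⟩)
      · exact Or.inl rfl
      · exact Or.inr ⟨rfl, by simp at hR'; omega⟩
      · exfalso; omega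
  · rintro h s hR (rfl | ⟨rfl, hh⟩) <;> simp <;> omega
  · exact fun _ _ _ _ _ => trivial

lemma shift_dy_dy : ∀ (l : List (ℤ × ℤ)) (h : ℤ), 0 ≤ h →
    (okB Bdy h l ↔ okB Bdy (h + 1) l ∧ ∀ i ≤ l.length, 0 ≤ h + HS (l.take i)) := by
  apply okB_shift
  · intro h s hR hR'
    constructor
    · rintro (rfl | ⟨rfl, hh⟩)
      · exact Or.inl rfl
      · exact Or.inr ⟨rfl, by omega⟩
    · rintro (rfl | ⟨rfl, hh⟩)
      · exact Or.inl rfl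
      · refine Or.inr ⟨rfl, ?_⟩
        simp at hR'
        omega
  · rintro h s hR (rfl | ⟨rfl, hh⟩) <;> simp <;> omega
  · exact fun _ _ _ _ _ => trivial

lemma shift_sc_star : ∀ (l : List (ℤ × ℤ)) (h : ℤ), h ≤ 0 →
    (okB Bsc h l ↔ okB Bstar (h + (-1)) l ∧ ∀ i ≤ l.length, h + HS (l.take i) ≤ 0) := by
  apply okB_shift
  · intro h s hR hR'
    constructor
    · rintro (⟨rfl, hh⟩ | rfl | rfl)
      · exact Or.inl rfl
      · exact Or.inr (Or.inl rfl)
      · exact Or.inr (Or.inr ⟨rfl, by omega⟩)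
    · rintro (rfl | rfl | ⟨rfl, hh⟩)
      · refine Or.inl ⟨rfl, ?_⟩
        simp at hR'
        omega
      · exact Or.inr (Or.inl rfl)
      · exact Or.inr (Or.inr rfl)
  · rintro h s hR (⟨rfl, hh⟩ | rfl | rfl) <;> simp <;> omega
  · exact fun _ _ _ _ _ => trivial

lemma shift_sc_sc : ∀ (l : List (ℤ × ℤ)) (h : ℤ), h ≤ 0 →
    (okB Bsc h l ↔ okB Bsc (h + (-1)) l ∧ ∀ i ≤ l.length, h + HS (l.take i) ≤ 0) := by
  apply okB_shift
  · intro h s hR hR'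
    constructor
    · rintro (⟨rfl, hh⟩ | rfl | rfl)
      · exact Or.inl ⟨rfl, by omega⟩
      · exact Or.inr (Or.inl rfl)
      · exact Or.inr (Or.inr rfl)
    · rintro (⟨rfl, hh⟩ | rfl | rfl)
      · refine Or.inl ⟨rfl, ?_⟩
        simp at hR'
        omega
      · exact Or.inr (Or.inl rfl)
      · exact Or.inr (Or.inr rfl)
  · rintro h s hR (⟨rfl, hh⟩ | rfl | rfl) <;> simp <;> omega
  · exact fun _ _ _ _ _ => trivial


def shape (s : ℤ × ℤ) : Prop := s = (1,0) ∨ s = (0,1) ∨ s = (1,1)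

lemma XS_nonneg (l : List (ℤ × ℤ)) (hl : ∀ s ∈ l, shape s) : 0 ≤ XS l := by
  induction l with
  | nil => simp
  | cons a t ih =>
      have h1 := ih fun s hs => hl s (by simp [hs])
      have h2 : 0 ≤ a.1 := by rcases hl a (by simp) with rfl | rfl | rfl <;> norm_num
      simp only [XS_cons]; linarith

lemma XS_zero_HS (l : List (ℤ × ℤ)) (hl : ∀ s ∈ l, shape s) (h0 : XS l = 0) :
    HS l = -(l.length : ℤ) := by
  induction l with
  | nil => simp
  | cons a t ih =>
      have ht : ∀ s ∈ t, shape s := fun s hs => hl s (by simp [hs])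
      have h2 : 0 ≤ XS t := XS_nonneg t ht
      have h3 : a.1 = 0 ∧ XS t = 0 := by
        have h4 : 0 ≤ a.1 ∧ a.1 ≤ 1 := by rcases hl a (by simp) with rfl | rfl | rfl <;> norm_num
        constructor <;> [skip; skip] <;> simp only [XS_cons] at h0 <;> omega
      have ha : a = (0,1) := by rcases hl a (by simp) with rfl | rfl | rfl <;> simp_all
      rw [HS_cons, ih ht h3.2, ha]
      simp

lemma endPt_spec (l : List (ℤ × ℤ)) (u v : ℤ) : endPt l = (u, v) ↔ XS l = u ∧ YS l = v := by
  rw [endPt_eq, Prod.ext_iff]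

lemma HS_of_diag {l : List (ℤ × ℤ)} {m : ℤ} (h : endPt l = (m, m)) : HS l = 0 := by
  rw [endPt_spec] at h
  simp [HS, XS, YS] at *
  omega

lemma glue_mem {B} {k n : ℕ} (hk : k ≤ n) {a r : List (ℤ × ℤ)}
    (ha : a ∈ Seg B (k+1)) (hr : r ∈ PB B (n-k)) : a ++ r ∈ PB B (n+1) := by
  obtain ⟨hok, hend, -, -⟩ := ha
  obtain ⟨hok', hend'⟩ := hr
  constructor
  · rw [okB_append, HS_of_diag hend]
    exact ⟨hok, by simpa using hok'⟩
  · rw [endPt_spec] at hend hend' ⊢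
    rw [XS_append, YS_append, hend.1, hend.2, hend'.1, hend'.2]
    have : ((n - k : ℕ) : ℤ) = (n : ℤ) - k := by
      rw [Nat.cast_sub hk]
    rw [this]
    constructor <;> push_cast <;> ring

lemma seg_prefix_aux {B} {j1 j2 : ℕ} {a1 a2 r1 r2 : List (ℤ × ℤ)}
    (h1 : a1 ∈ Seg B j1) (h2 : a2 ∈ Seg B j2)
    (e : a1 ++ r1 = a2 ++ r2) (hlen : a1.length ≤ a2.length) : a1 = a2 := by
  have key : a1 = a2.take a1.length := by
    have : (a1 ++ r1).take a1.length = (a2 ++ r2).take a1.length := by rw [e]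
    rwa [List.take_left, List.take_append_of_le_length hlen] at this
  rcases Nat.lt_or_ge a1.length a2.length with hlt | hge
  · exfalso
    obtain ⟨-, -, hne, hint⟩ := h2
    refine hint a1.length (List.length_pos_iff.mpr h1.2.2.1) hlt ?_
    rw [← key]
    exact HS_of_diag h1.2.1
  · have : a1.length = a2.length := le_antisymm hlen hge
    rw [key, this, List.take_length]

lemma seg_prefix {B} {j1 j2 : ℕ} {a1 a2 r1 r2 : List (ℤ × ℤ)}
    (h1 : a1 ∈ Seg B j1) (h2 : a2 ∈ Seg B j2)
    (e : a1 ++ r1 = a2 ++ r2) : a1 = a2 ∧ r1 = r2 := by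
  have ha : a1 = a2 := by
    rcases le_total a1.length a2.length with h | h
    · exact seg_prefix_aux h1 h2 e h
    · exact (seg_prefix_aux h2 h1 e.symm h).symm
  subst ha
  exact ⟨rfl, List.append_cancel_left e⟩

lemma master {B} (hB : Good B) (n : ℕ) :
    Nat.card (PB B (n+1)) =
      ∑ k ∈ Finset.range (n+1), Nat.card (Seg B (k+1)) * Nat.card (PB B (n-k)) := by
  classical
  haveI hfseg : ∀ m : ℕ, Finite (Seg B m) := fun m => (Seg_finite hB m).to_subtype
  haveI hfpb : ∀ m : ℕ, Finite (PB B m) := fun m => (PB_finite hB m).to_subtype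
  set β : Fin (n+1) → Type := fun k => (Seg B (k.1+1)) × (PB B (n - k.1)) with hβ
  have hg : ∀ x : Σ k : Fin (n+1), β k, x.2.1.1 ++ x.2.2.1 ∈ PB B (n+1) := by
    rintro ⟨k, a, r⟩
    exact glue_mem (Nat.lt_succ_iff.mp k.2) a.2 r.2
  set g : (Σ k : Fin (n+1), β k) → PB B (n+1) := fun x => ⟨x.2.1.1 ++ x.2.2.1, hg x⟩ with hgdef
  have hinj : Function.Injective g := by
    rintro ⟨k1, a1, r1⟩ ⟨k2, a2, r2⟩ h
    have e : (a1 : List (ℤ × ℤ)) ++ r1 = (a2 : List (ℤ × ℤ)) ++ r2 := congrArg Subtype.val h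
    obtain ⟨ea, er⟩ := seg_prefix a1.2 a2.2 e
    have hk : k1 = k2 := by
      have e1 := a1.2.2.1
      have e2 := a2.2.2.1
      rw [ea] at e1
      rw [e1] at e2
      have : ((k1.1 : ℤ) + 1, (k1.1 : ℤ) + 1) = ((k2.1 : ℤ) + 1, (k2.1 : ℤ) + 1) := by
        push_cast at e2 ⊢
        exact e2
      have h2 : (k1.1 : ℤ) = k2.1 := by
        have := congrArg Prod.fst this
        simpa using this
    -- conclude
      exact Fin.ext (by exact_mod_cast h2)
    subst hk
    have ha' : a1 = a2 := Subtype.ext ea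
    have hr' : r1 = r2 := Subtype.ext er
    rw [ha', hr']
  have hsurj : Function.Surjective g := by
    rintro ⟨l, hok, hend⟩
    have hsteps : ∀ s ∈ l, shape s := okB_steps hB l 0 hok
    have hlpos : 0 < l.length := by
      rcases l with - | ⟨s, t⟩
      · exfalso
        rw [endPt_spec] at hend
        simp at hend
        omega
      · simp
    have hP : ∃ i, 1 ≤ i ∧ HS (l.take i) = 0 := by
      refine ⟨l.length, hlpos, ?_⟩
      rw [List.take_length]
      exact HS_of_diag hend
    set i0 := Nat.find hP with hi0def
    obtain ⟨hi01, hi0H⟩ := Nat.find_spec hP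
    have hi0len : i0 ≤ l.length := Nat.find_min' hP ⟨hlpos, by rw [List.take_length]; exact HS_of_diag hend⟩
    set a := l.take i0 with hadef
    set r := l.drop i0 with hrdef
    have hasteps : ∀ s ∈ a, shape s := fun s hs => hsteps s (List.take_subset _ _ hs)
    have halen : a.length = i0 := by
      rw [hadef, List.length_take]
      omega
    have hXa1 : 1 ≤ XS a := by
      rcases Nat.lt_or_ge 0 (XS a).toNat with h | h
      · omega
      · exfalso
        have h0 : XS a = 0 := by
          have := XS_nonneg a hasteps
          omega
        have := XS_zero_HS a hasteps h0
        rw [halen] at this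
        rw [this] at hi0H
        omega
    have hXS_l : XS l = (n : ℤ) + 1 ∧ YS l = (n : ℤ) + 1 := by
      rw [endPt_spec] at hend
      exact ⟨by exact_mod_cast hend.1, by exact_mod_cast hend.2⟩
    have hXsplit : XS a + XS r = (n : ℤ) + 1 := by
      rw [← XS_append, hadef, hrdef, List.take_append_drop]
      exact hXS_l.1
    have hXr : 0 ≤ XS r := XS_nonneg r fun s hs => hsteps s (List.drop_subset _ _ hs)
    set k : ℕ := (XS a).toNat - 1 with hkdef
    have hkval : (k : ℤ) + 1 = XS a := by
      omega
    have hkn : k ≤ n := by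
      omega
    have hamem : a ∈ Seg B (k+1) := by
      refine ⟨?_, ?_, ?_, ?_⟩
      · have := (okB_append B a r 0).mp (by rw [hadef, hrdef, List.take_append_drop]; exact hok)
        exact this.1
      · rw [endPt_spec]
        constructor
        · push_cast; omega
        · have : YS a = XS a - HS a := by simp [HS]
          rw [this, hi0H]
          push_cast; omega
      · intro hnil
        rw [hnil] at halen
        simp at halen
        omega
      · intro i hipos hilen
        have hitake : a.take i = l.take i := by
          rw [hadef, List.take_take]
          congr 1
          omega
        rw [hitake]
        intro hcon
        have := Nat.find_min hP (m := i) (by omega)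
        exact this ⟨hipos, hcon⟩
    have hrmem : r ∈ PB B (n - k) := by
      constructor
      · have := (okB_append B a r 0).mp (by rw [hadef, hrdef, List.take_append_drop]; exact hok)
        have h2 := this.2
        rw [hi0H] at h2
        simpa using h2
      · rw [endPt_spec]
        have hYsplit : YS a + YS r = (n : ℤ) + 1 := by
          rw [← YS_append, hadef, hrdef, List.take_append_drop]
          exact hXS_l.2
        have hYa : YS a = XS a := by
          have : HS a = 0 := hi0H
          simp [HS] at this
          omega
        have hc : ((n - k : ℕ) : ℤ) = (n : ℤ) - k := by rw [Nat.cast_sub hkn]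
        rw [hc]
        constructor <;> omega
    refine ⟨⟨⟨k, Nat.lt_succ_of_le hkn⟩, ⟨a, hamem⟩, ⟨r, hrmem⟩⟩, ?_⟩
    apply Subtype.ext
    simp only [hgdef]
    rw [hadef, hrdef, List.take_append_drop]
  have hcard : Nat.card (PB B (n+1)) = Nat.card (Σ k : Fin (n+1), β k) :=
    (Nat.card_congr (Equiv.ofBijective g ⟨hinj, hsurj⟩)).symm
  rw [hcard]
  haveI : ∀ m : ℕ, Fintype (Seg B m) := fun m => Fintype.ofFinite _
  haveI : ∀ m : ℕ, Fintype (PB B m) := fun m => Fintype.ofFinite _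
  rw [Nat.card_eq_fintype_card]
  rw [Fintype.card_sigma]
  have hterm : ∀ k : Fin (n+1), Fintype.card (β k) =
      Nat.card (Seg B (k.1+1)) * Nat.card (PB B (n-k.1)) := by
    intro k
    show Fintype.card ((Seg B (k.1+1)) × (PB B (n-k.1))) = _
    rw [Fintype.card_prod, Nat.card_eq_fintype_card, Nat.card_eq_fintype_card]
  simp only [hterm]
  exact Fin.sum_univ_eq_sum_range (fun k => Nat.card (Seg B (k+1)) * Nat.card (PB B (n-k))) (n+1)


lemma HS_take_succ (l : List (ℤ × ℤ)) (j : ℕ) (hj : j < l.length) :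
    HS (l.take (j+1)) = HS (l.take j) + ((l[j]'hj).1 - (l[j]'hj).2) := by
  have h : l.take (j+1) = l.take j ++ [l[j]'hj] := by
    rw [List.take_succ]
    congr
    rw [List.getElem?_eq_getElem hj]
    rfl
  rw [h, HS_append]
  simp [HS, XS, YS]

lemma delta_bound {l : List (ℤ × ℤ)} (hsh : ∀ s ∈ l, shape s) (j : ℕ) (hj : j < l.length) :
    (l[j]'hj).1 - (l[j]'hj).2 = 1 ∨ (l[j]'hj).1 - (l[j]'hj).2 = -1 ∨
      (l[j]'hj).1 - (l[j]'hj).2 = 0 := by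
  rcases hsh _ (List.getElem_mem hj) with h | h | h <;> rw [h] <;> norm_num

lemma pos_persist (l : List (ℤ × ℤ)) (hsh : ∀ s ∈ l, shape s)
    (hint : ∀ i, 0 < i → i < l.length → HS (l.take i) ≠ 0)
    (h1 : HS (l.take 1) = 1) :
    ∀ i, 0 < i → i < l.length → 0 < HS (l.take i) := by
  intro i
  induction i with
  | zero => omega
  | succ j ih =>
      intro hi hilen
      rcases Nat.eq_zero_or_pos j with rfl | hj
      · simp only [Nat.zero_add] at *
        omega
      · have hjlen : j < l.length := by omega
        have hprev := ih hj hjlen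
        have hstep := HS_take_succ l j hjlen
        have hdel := delta_bound hsh j hjlen
        have hne := hint (j+1) (by omega) hilen
        omega

lemma neg_persist (l : List (ℤ × ℤ)) (hsh : ∀ s ∈ l, shape s)
    (hint : ∀ i, 0 < i → i < l.length → HS (l.take i) ≠ 0)
    (h1 : HS (l.take 1) = -1) :
    ∀ i, 0 < i → i < l.length → HS (l.take i) < 0 := by
  intro i
  induction i with
  | zero => omega
  | succ j ih =>
      intro hi hilen
      rcases Nat.eq_zero_or_pos j with rfl | hj
      · simp only [Nat.zero_add] at *
        omega
      · have hjlen : j < l.length := by omega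
        have hprev := ih hj hjlen
        have hstep := HS_take_succ l j hjlen
        have hdel := delta_bound hsh j hjlen
        have hne := hint (j+1) (by omega) hilen
        omega


def wrapRU (w : List (ℤ × ℤ)) : List (ℤ × ℤ) := (1,0) :: (w ++ [(0,1)])
def wrapUR (w : List (ℤ × ℤ)) : List (ℤ × ℤ) := (0,1) :: (w ++ [(1,0)])

lemma wrapRU_inj : Function.Injective wrapRU := by
  intro a b h
  simp only [wrapRU, List.cons.injEq] at h
  exact List.append_cancel_right h.2

lemma wrapUR_inj : Function.Injective wrapUR := by
  intro a b h
  simp only [wrapUR, List.cons.injEq] at h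
  exact List.append_cancel_right h.2

lemma wrap_mem_pos {B' : ℤ → ℤ × ℤ → Prop} (hR : B' 0 (1,0)) (hU : B' 1 (0,1))
    (shift : ∀ (l : List (ℤ × ℤ)) (h : ℤ), 0 ≤ h →
      (okB Bdy h l ↔ okB B' (h + 1) l ∧ ∀ i ≤ l.length, 0 ≤ h + HS (l.take i)))
    {k : ℕ} {w : List (ℤ × ℤ)} (hw : w ∈ PB Bdy k) : wrapRU w ∈ Seg B' (k+1) := by
  obtain ⟨hok, hend⟩ := hw
  obtain ⟨hok', hreg⟩ := (shift w 0 le_rfl).mp hok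
  rw [endPt_spec] at hend
  have hHw : HS w = 0 := by simp [HS]; omega
  simp only [zero_add] at hok' hreg
  refine ⟨?_, ?_, by simp [wrapRU], ?_⟩
  · simp only [wrapRU, okB_cons, okB_append]
    norm_num
    refine ⟨hR, hok', ?_⟩
    rw [hHw]
    simpa using hU
  · rw [endPt_spec]
    simp only [wrapRU, XS_cons, YS_cons, XS_append, YS_append]
    simp [XS, YS] at hend ⊢
    omega
  · intro i hi hlen
    obtain ⟨j, rfl⟩ : ∃ j, i = j + 1 := ⟨i - 1, by omega⟩
    have hj : j ≤ w.length := by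
      simp [wrapRU] at hlen
      omega
    have htake : (wrapRU w).take (j+1) = (1,0) :: (w.take j) := by
      simp only [wrapRU, List.take_succ_cons]
      rw [List.take_append_of_le_length hj]
    rw [htake, HS_cons]
    have := hreg j hj
    norm_num
    omega

lemma wrap_mem_neg {B' : ℤ → ℤ × ℤ → Prop} (hU : B' 0 (0,1)) (hR : B' (-1) (1,0))
    (shift : ∀ (l : List (ℤ × ℤ)) (h : ℤ), h ≤ 0 →
      (okB Bsc h l ↔ okB B' (h + (-1)) l ∧ ∀ i ≤ l.length, h + HS (l.take i) ≤ 0))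
    {k : ℕ} {w : List (ℤ × ℤ)} (hw : w ∈ PB Bsc k) : wrapUR w ∈ Seg B' (k+1) := by
  obtain ⟨hok, hend⟩ := hw
  obtain ⟨hok', hreg⟩ := (shift w 0 le_rfl).mp hok
  rw [endPt_spec] at hend
  have hHw : HS w = 0 := by simp [HS]; omega
  simp only [zero_add] at hok' hreg
  refine ⟨?_, ?_, by simp [wrapUR], ?_⟩
  · simp only [wrapUR, okB_cons, okB_append]
    norm_num
    refine ⟨hU, hok', ?_⟩
    rw [hHw]
    simpa using hR
  · rw [endPt_spec]
    simp only [wrapUR, XS_cons, YS_cons, XS_append, YS_append]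
    simp [XS, YS] at hend ⊢
    omega
  · intro i hi hlen
    obtain ⟨j, rfl⟩ : ∃ j, i = j + 1 := ⟨i - 1, by omega⟩
    have hj : j ≤ w.length := by
      simp [wrapUR] at hlen
      omega
    have htake : (wrapUR w).take (j+1) = (0,1) :: (w.take j) := by
      simp only [wrapUR, List.take_succ_cons]
      rw [List.take_append_of_le_length hj]
    rw [htake, HS_cons]
    have := hreg j hj
    norm_num
    omega

lemma seg_decomp_pos {B' : ℤ → ℤ × ℤ → Prop} (hB' : Good B')
    (shift : ∀ (l : List (ℤ × ℤ)) (h : ℤ), 0 ≤ h →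
      (okB Bdy h l ↔ okB B' (h + 1) l ∧ ∀ i ≤ l.length, 0 ≤ h + HS (l.take i)))
    {k : ℕ} {l : List (ℤ × ℤ)} (hl : l ∈ Seg B' (k+1)) {t : List (ℤ × ℤ)}
    (hd : l = (1,0) :: t) : ∃ w ∈ PB Bdy k, l = wrapRU w := by
  obtain ⟨hok, hend, hne, hint⟩ := hl
  subst hd
  have hsh : ∀ s ∈ (1,0) :: t, shape s := okB_steps hB' _ 0 hok
  rw [endPt_spec] at hend
  push_cast at hend
  have ht : t ≠ [] := by
    rintro rfl
    simp [XS, YS] at hend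
    omega
  obtain ⟨w, u, rfl⟩ : ∃ w u, t = w ++ [u] := by
    rcases List.eq_nil_or_concat t with h | ⟨w, u, h⟩
    · exact absurd h ht
    · exact ⟨w, u, by simpa [List.concat_eq_append] using h⟩
  have hlen : ((1,0) :: (w ++ [u])).length = w.length + 2 := by simp
  have hpos := pos_persist _ hsh hint (by simp [HS, XS, YS])
  have htakeprev : ((1,0) :: (w ++ [u])).take (w.length + 1) = (1,0) :: w := by
    simp only [List.take_succ_cons]
    rw [List.take_append_of_le_length le_rfl, List.take_length]
  have hp : 0 < HS ((1,0) :: w) := by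
    have := hpos (w.length + 1) (by omega) (by omega)
    rwa [htakeprev] at this
  have hH0 : HS ((1,0) :: (w ++ [u])) = 0 := by
    simp only [HS]
    omega
  have hsplit : HS ((1,0) :: (w ++ [u])) = HS ((1,0) :: w) + (u.1 - u.2) := by
    rw [show (1,0) :: (w ++ [u]) = ((1,0) :: w) ++ [u] by simp, HS_append]
    simp [HS, XS, YS]
  have hu : u = (0,1) := by
    rcases hsh u (by simp) with h | h | h
    · subst h; norm_num at hsplit; omega
    · exact h
    · subst h; rw [hH0] at hsplit; norm_num at hsplit; omega
  subst hu
  have hokw : okB B' 1 w := by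
    obtain ⟨-, hok2⟩ := hok
    rw [okB_append] at hok2
    have := hok2.1
    norm_num at this
    exact this
  have hreg : ∀ i ≤ w.length, 0 ≤ 0 + HS (w.take i) := by
    intro i hi
    rcases Nat.eq_zero_or_pos i with rfl | hipos
    · simp
    · have htake : ((1,0) :: (w ++ [(0,1)])).take (i+1) = (1,0) :: w.take i := by
        simp only [List.take_succ_cons]
        rw [List.take_append_of_le_length hi]
      have := hpos (i+1) (by omega) (by omega)
      rw [htake, HS_cons] at this
      norm_num at this
      omega
  have hokdy : okB Bdy 0 w := (shift w 0 le_rfl).mpr ⟨by simpa using hokw, hreg⟩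
  refine ⟨w, ⟨hokdy, ?_⟩, by simp [wrapRU]⟩
  rw [endPt_spec]
  simp [XS, YS] at hend ⊢
  push_cast at hend ⊢
  omega

lemma seg_decomp_neg {B' : ℤ → ℤ × ℤ → Prop} (hB' : Good B')
    (shift : ∀ (l : List (ℤ × ℤ)) (h : ℤ), h ≤ 0 →
      (okB Bsc h l ↔ okB B' (h + (-1)) l ∧ ∀ i ≤ l.length, h + HS (l.take i) ≤ 0))
    {k : ℕ} {l : List (ℤ × ℤ)} (hl : l ∈ Seg B' (k+1)) {t : List (ℤ × ℤ)}
    (hd : l = (0,1) :: t) : ∃ w ∈ PB Bsc k, l = wrapUR w := by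
  obtain ⟨hok, hend, hne, hint⟩ := hl
  subst hd
  have hsh : ∀ s ∈ (0,1) :: t, shape s := okB_steps hB' _ 0 hok
  rw [endPt_spec] at hend
  push_cast at hend
  have ht : t ≠ [] := by
    rintro rfl
    simp [XS, YS] at hend
    omega
  obtain ⟨w, u, rfl⟩ : ∃ w u, t = w ++ [u] := by
    rcases List.eq_nil_or_concat t with h | ⟨w, u, h⟩
    · exact absurd h ht
    · exact ⟨w, u, by simpa [List.concat_eq_append] using h⟩
  have hlen : ((0,1) :: (w ++ [u])).length = w.length + 2 := by simp
  have hpos := neg_persist _ hsh hint (by simp [HS, XS, YS])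
  have htakeprev : ((0,1) :: (w ++ [u])).take (w.length + 1) = (0,1) :: w := by
    simp only [List.take_succ_cons]
    rw [List.take_append_of_le_length le_rfl, List.take_length]
  have hp : HS ((0,1) :: w) < 0 := by
    have := hpos (w.length + 1) (by omega) (by omega)
    rwa [htakeprev] at this
  have hH0 : HS ((0,1) :: (w ++ [u])) = 0 := by
    simp only [HS]
    omega
  have hsplit : HS ((0,1) :: (w ++ [u])) = HS ((0,1) :: w) + (u.1 - u.2) := by
    rw [show (0,1) :: (w ++ [u]) = ((0,1) :: w) ++ [u] by simp, HS_append]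
    simp [HS, XS, YS]
  have hu : u = (1,0) := by
    rcases hsh u (by simp) with h | h | h
    · exact h
    · subst h; norm_num at hsplit; omega
    · subst h; rw [hH0] at hsplit; norm_num at hsplit; omega
  subst hu
  have hokw : okB B' (-1) w := by
    obtain ⟨-, hok2⟩ := hok
    rw [okB_append] at hok2
    have := hok2.1
    norm_num at this
    exact this
  have hreg : ∀ i ≤ w.length, 0 + HS (w.take i) ≤ 0 := by
    intro i hi
    rcases Nat.eq_zero_or_pos i with rfl | hipos
    · simp
    · have htake : ((0,1) :: (w ++ [(1,0)])).take (i+1) = (0,1) :: w.take i := by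
        simp only [List.take_succ_cons]
        rw [List.take_append_of_le_length hi]
      have := hpos (i+1) (by omega) (by omega)
      rw [htake, HS_cons] at this
      norm_num at this
      omega
  have hoksc : okB Bsc 0 w := (shift w 0 le_rfl).mpr ⟨by simpa using hokw, hreg⟩
  refine ⟨w, ⟨hoksc, ?_⟩, by simp [wrapUR]⟩
  rw [endPt_spec]
  simp [XS, YS] at hend ⊢
  push_cast at hend ⊢
  omega


lemma seg_dy_eq (k : ℕ) : Seg Bdy (k+1) = wrapRU '' (PB Bdy k) := by
  ext l
  constructor
  · intro hl
    obtain ⟨hok, hend, hne, hint⟩ := hl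
    rcases l with - | ⟨s, t⟩
    · exact absurd rfl hne
    · rcases hok.1 with h | ⟨h, hh⟩
      · subst h
        obtain ⟨w, hw, heq⟩ := seg_decomp_pos good_dy shift_dy_dy ⟨hok, hend, hne, hint⟩ rfl
        exact ⟨w, hw, heq.symm⟩
      · exact absurd hh (by norm_num)
  · rintro ⟨w, hw, rfl⟩
    exact wrap_mem_pos (Or.inl rfl) (Or.inr ⟨rfl, one_pos⟩) shift_dy_dy hw

lemma seg_star_eq (k : ℕ) :
    Seg Bstar (k+1) = wrapRU '' (PB Bdy k) ∪ wrapUR '' (PB Bsc k) := by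
  ext l
  constructor
  · intro hl
    obtain ⟨hok, hend, hne, hint⟩ := hl
    rcases l with - | ⟨s, t⟩
    · exact absurd rfl hne
    · rcases hok.1 with h | h | ⟨h, hh⟩
      · subst h
        obtain ⟨w, hw, heq⟩ := seg_decomp_pos good_star shift_dy_star ⟨hok, hend, hne, hint⟩ rfl
        exact Or.inl ⟨w, hw, heq.symm⟩
      · subst h
        obtain ⟨w, hw, heq⟩ := seg_decomp_neg good_star shift_sc_star ⟨hok, hend, hne, hint⟩ rfl
        exact Or.inr ⟨w, hw, heq.symm⟩
      · exact absurd hh (by norm_num)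
  · rintro (⟨w, hw, rfl⟩ | ⟨w, hw, rfl⟩)
    · exact wrap_mem_pos (Or.inl rfl) (Or.inr (Or.inl rfl)) shift_dy_star hw
    · exact wrap_mem_neg (Or.inr (Or.inl rfl)) (Or.inl rfl) shift_sc_star hw

lemma seg_sc_eq (k : ℕ) :
    Seg Bsc (k+1) = wrapUR '' (PB Bsc k) ∪ {l | l = [((1:ℤ),(1:ℤ))] ∧ k = 0} := by
  ext l
  constructor
  · intro hl
    obtain ⟨hok, hend, hne, hint⟩ := hl
    rcases l with - | ⟨s, t⟩
    · exact absurd rfl hne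
    · rcases hok.1 with ⟨h, hh⟩ | h | h
      · exact absurd hh (by norm_num)
      · subst h
        obtain ⟨w, hw, heq⟩ := seg_decomp_neg good_sc shift_sc_sc ⟨hok, hend, hne, hint⟩ rfl
        exact Or.inl ⟨w, hw, heq.symm⟩
      · subst h
        right
        have ht : t = [] := by
          rcases t with - | ⟨u, t'⟩
          · rfl
          · exfalso
            refine hint 1 one_pos (by simp) ?_
            simp [HS, XS, YS]
        subst ht
        rw [endPt_spec] at hend
        simp [XS, YS] at hend
        have : k = 0 := by omega
        exact ⟨rfl, this⟩
  · rintro (⟨w, hw, rfl⟩ | ⟨h1, h2⟩)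
    · exact wrap_mem_neg (Or.inr (Or.inl rfl)) (Or.inl ⟨rfl, by norm_num⟩) shift_sc_sc hw
    · subst h1
      subst h2
      refine ⟨⟨Or.inr (Or.inr rfl), trivial⟩, ?_, by simp, ?_⟩
      · rw [endPt_spec]
        simp [XS, YS]
      · intro i hi hilen
        simp at hilen
        omega

lemma disj_RU_UR (A C : Set (List (ℤ × ℤ))) : Disjoint (wrapRU '' A) (wrapUR '' C) := by
  rw [Set.disjoint_left]
  rintro l ⟨w, -, rfl⟩ ⟨v, -, hv⟩
  simp only [wrapRU, wrapUR, List.cons.injEq] at hv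
  exact absurd (congrArg Prod.fst hv.1) (by norm_num)

lemma card_seg_dy (k : ℕ) : Nat.card (Seg Bdy (k+1)) = Nat.card (PB Bdy k) := by
  rw [seg_dy_eq, Nat.card_coe_set_eq, Nat.card_coe_set_eq,
    Set.ncard_image_of_injective _ wrapRU_inj]

lemma card_seg_star (k : ℕ) :
    Nat.card (Seg Bstar (k+1)) = Nat.card (PB Bdy k) + Nat.card (PB Bsc k) := by
  rw [seg_star_eq, Nat.card_coe_set_eq, Nat.card_coe_set_eq, Nat.card_coe_set_eq,
    Set.ncard_union_eq (disj_RU_UR _ _) ((PB_finite good_dy k).image _)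
      ((PB_finite good_sc k).image _),
    Set.ncard_image_of_injective _ wrapRU_inj, Set.ncard_image_of_injective _ wrapUR_inj]

lemma card_seg_sc (k : ℕ) :
    Nat.card (Seg Bsc (k+1)) = Nat.card (PB Bsc k) + if k = 0 then 1 else 0 := by
  rw [seg_sc_eq, Nat.card_coe_set_eq, Nat.card_coe_set_eq]
  rcases Nat.eq_zero_or_pos k with rfl | hk
  · have hset : {l : List (ℤ × ℤ) | l = [((1:ℤ),(1:ℤ))] ∧ (0:ℕ) = 0} = {[((1:ℤ),(1:ℤ))]} := by
      ext l; simp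
    rw [hset]
    rw [Set.ncard_union_eq ?disj ((PB_finite good_sc 0).image _) (Set.finite_singleton _),
      Set.ncard_image_of_injective _ wrapUR_inj, Set.ncard_singleton]
    · simp
    case disj =>
      rw [Set.disjoint_left]
      rintro l ⟨w, -, rfl⟩ hl
      simp only [Set.mem_singleton_iff, wrapUR] at hl
      have := congrArg Prod.fst (List.head_eq_of_cons_eq hl)
      norm_num at this
  · have hset : {l : List (ℤ × ℤ) | l = [((1:ℤ),(1:ℤ))] ∧ k = 0} = ∅ := by
      ext l; simp; omega
    rw [hset, Set.union_empty, Set.ncard_image_of_injective _ wrapUR_inj]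
    simp [Nat.pos_iff_ne_zero.mp hk]


lemma PB_zero {B} (hB : Good B) : PB B 0 = {([] : List (ℤ × ℤ))} := by
  ext l
  constructor
  · rintro ⟨hok, hend⟩
    rw [endPt_spec] at hend
    have hlen := length_le l (okB_steps hB l 0 hok)
    rw [hend.1, hend.2] at hlen
    have hl0 : l.length = 0 := by push_cast at hlen; omega
    exact List.length_eq_zero_iff.mp hl0
  · rintro rfl
    exact ⟨trivial, by rw [endPt_spec]; simp [XS, YS]⟩

lemma card_PB_zero {B} (hB : Good B) : Nat.card (PB B 0) = 1 := by
  rw [PB_zero hB, Nat.card_coe_set_eq, Set.ncard_singleton]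

lemma card_dy (m : ℕ) : Nat.card (PB Bdy m) = catalan m := by
  induction m using Nat.strong_induction_on with
  | _ m ih =>
    rcases m with - | m
    · rw [card_PB_zero good_dy, catalan_zero]
    · rw [master good_dy m, catalan_succ m,
        Fin.sum_univ_eq_sum_range (fun i => catalan i * catalan (m - i)) (m+1)]
      apply Finset.sum_congr rfl
      intro k hk
      simp only [Finset.mem_range] at hk
      rw [card_seg_dy, ih k (by omega), ih (m - k) (by omega)]

lemma schroeder_succ (m : ℕ) :
    schroeder (m+1) = schroeder m + ∑ k ∈ Finset.range (m+1), schroeder k * schroeder (m-k) := by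
  rw [schroeder, Fin.sum_univ_eq_sum_range (fun i => schroeder i * schroeder (m - i)) (m+1)]

lemma card_sc (m : ℕ) : Nat.card (PB Bsc m) = schroeder m := by
  induction m using Nat.strong_induction_on with
  | _ m ih =>
    rcases m with - | m
    · rw [card_PB_zero good_sc]
      simp [schroeder]
    · rw [master good_sc m]
      have hterm : ∀ k ∈ Finset.range (m+1),
          Nat.card (Seg Bsc (k+1)) * Nat.card (PB Bsc (m-k)) =
          schroeder k * schroeder (m-k) + (if k = 0 then 1 else 0) * schroeder (m-k) := by
        intro k hk
        simp only [Finset.mem_range] at hk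
        rw [card_seg_sc, ih (m-k) (by omega), ih k (by omega), add_mul]
      rw [Finset.sum_congr rfl hterm, Finset.sum_add_distrib]
      have hsingle : ∑ k ∈ Finset.range (m+1), (if k = 0 then 1 else 0) * schroeder (m-k)
          = schroeder m := by
        rw [Finset.sum_eq_single_of_mem 0 (by simp)]
        · simp
        · intro k _ hk
          simp [hk]
      rw [hsingle, schroeder_succ]
      omega

lemma fs_rec (n : ℕ) : Nat.card (PB Bstar (n+1)) =
    ∑ k ∈ Finset.range (n+1), (catalan k + schroeder k) * Nat.card (PB Bstar (n-k)) := by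
  rw [master good_star n]
  apply Finset.sum_congr rfl
  intro k hk
  rw [card_seg_star, card_dy, card_sc]

lemma okFrom_iff (l : List (ℤ × ℤ)) : ∀ p : ℤ × ℤ,
    okFrom (fun p => p.1 < p.2) p l ↔ okB Bstar (p.1 - p.2) l := by
  induction l with
  | nil => intro p; simp [okFrom]
  | cons s t ih =>
      intro p
      simp only [okFrom, okB_cons]
      have heq : p.1 - p.2 + (s.1 - s.2) = (p.1 + s.1) - (p.2 + s.2) := by ring
      constructor
      · rintro ⟨h1, h2⟩
        refine ⟨?_, ?_⟩
        · rcases h1 with h | h | ⟨h, hp⟩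
          · exact Or.inl h
          · exact Or.inr (Or.inl h)
          · exact Or.inr (Or.inr ⟨h, by omega⟩)
        · rw [heq]
          exact (ih (p.1 + s.1, p.2 + s.2)).mp h2
      · rintro ⟨h1, h2⟩
        refine ⟨?_, ?_⟩
        · rcases h1 with h | h | ⟨h, hp⟩
          · exact Or.inl h
          · exact Or.inr (Or.inl h)
          · exact Or.inr (Or.inr ⟨h, by omega⟩)
        · rw [heq] at h2
          exact (ih (p.1 + s.1, p.2 + s.2)).mpr h2

lemma LCSstar_eq (n : ℕ) : LCSstar n n = PB Bstar n := by
  ext l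
  simp only [LCSstar, PB, Set.mem_setOf_eq]
  rw [okFrom_iff]
  norm_num

lemma fCSstar_eq (n : ℕ) : fCSstar n = Nat.card (PB Bstar n) := by
  rw [fCSstar, LCSstar_eq]

end Aux


/-- F*(x)·(1 − x·(C(x)+S(x))) = 1 in ℤ[[x]]. -/
theorem Fstar_gf :
    FstarGF * (1 - PowerSeries.X * (catalanGF + schroederGF)) = 1 := by
  have h0 : fCSstar 0 = 1 := by
    rw [Aux.fCSstar_eq]
    exact Aux.card_PB_zero Aux.good_star
  have hrec : ∀ n : ℕ, (fCSstar (n+1) : ℤ) =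
      ∑ k ∈ Finset.range (n+1), ((catalan k : ℤ) + (schroeder k : ℤ)) * (fCSstar (n-k) : ℤ) := by
    intro n
    rw [Aux.fCSstar_eq, Aux.fs_rec]
    push_cast
    apply Finset.sum_congr rfl
    intro k hk
    rw [Aux.fCSstar_eq]
  apply PowerSeries.ext
  intro n
  rw [mul_sub, mul_one,
    show FstarGF * (PowerSeries.X * (catalanGF + schroederGF)) =
      PowerSeries.X * ((catalanGF + schroederGF) * FstarGF) by ring,
    map_sub]
  rcases n with - | n
  · rw [PowerSeries.coeff_zero_X_mul]
    simp [FstarGF, PowerSeries.coeff_one, h0]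
  · rw [PowerSeries.coeff_succ_X_mul, PowerSeries.coeff_mul,
      Finset.Nat.sum_antidiagonal_eq_sum_range_succ_mk, PowerSeries.coeff_one]
    simp only [map_add, PowerSeries.coeff_mk, FstarGF, catalanGF, schroederGF]
    rw [if_neg (Nat.succ_ne_zero n), hrec n, sub_self]
end

section
/- Let f_n be the number of lattice paths from (0,0) to (n,n) in the lattice where steps (1,0) and (0,1) are allowed everywhere and steps (1,1) are allowed from points weakly above the diagonal y = x (including on the diagonal). Then F(x) = Σ f_n x^n satisfies F(x)·(1 − x·(C(x)+S(x)+1)) = 1 in ℤ[[x]]. -/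
open Finset PowerSeries

namespace CSAux

abbrev Step := ℤ × ℤ

def SE : Step := (1,0)
def SN : Step := (0,1)
def SD : Step := (1,1)

def hv (s : Step) : ℤ := s.1 - s.2

def ht (l : List Step) : ℤ := (l.map hv).sum

@[simp] lemma ht_nil : ht [] = 0 := rfl
@[simp] lemma ht_cons (s : Step) (l : List Step) : ht (s :: l) = hv s + ht l := by simp [ht]
@[simp] lemma ht_append (a b : List Step) : ht (a ++ b) = ht a + ht b := by simp [ht]

@[simp] lemma endPt_nil : endPt [] = (0,0) := rfl
lemma endPt_cons (s : Step) (l : List Step) :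
    endPt (s :: l) = (s.1 + (endPt l).1, s.2 + (endPt l).2) := by simp [endPt]
lemma endPt_append (a b : List Step) :
    endPt (a ++ b) = ((endPt a).1 + (endPt b).1, (endPt a).2 + (endPt b).2) := by simp [endPt]

lemma ht_eq (l : List Step) : ht l = (endPt l).1 - (endPt l).2 := by
  induction l with
  | nil => simp
  | cons s l ih => rw [ht_cons, endPt_cons, ih, hv]; ring

def steps3 (l : List Step) : Prop := ∀ s ∈ l, s = SE ∨ s = SN ∨ s = SD

def belowPre (l : List Step) : Prop := ∀ u, u <+: l → 0 ≤ ht u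

def Ok (c : Step → ℤ → Prop) : ℤ → List Step → Prop
  | _, [] => True
  | h, s :: l => c s h ∧ Ok c (h + hv s) l

@[simp] lemma Ok_nil (c : Step → ℤ → Prop) (h : ℤ) : Ok c h [] := trivial
@[simp] lemma Ok_cons {c : Step → ℤ → Prop} {h : ℤ} {s : Step} {l : List Step} :
    Ok c h (s :: l) ↔ c s h ∧ Ok c (h + hv s) l := Iff.rfl

lemma Ok_append {c : Step → ℤ → Prop} {h : ℤ} {A B : List Step} :
    Ok c h (A ++ B) ↔ Ok c h A ∧ Ok c (h + ht A) B := by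
  induction A generalizing h with
  | nil => simp
  | cons s A ih => simp [ih, add_assoc, and_assoc]

lemma Ok_at {c : Step → ℤ → Prop} {h : ℤ} {l u w : List Step} {s : Step}
    (hOk : Ok c h l) (hl : l = u ++ s :: w) : c s (h + ht u) := by
  subst hl
  exact ((Ok_append.1 hOk).2).1

lemma Ok_of_at {c : Step → ℤ → Prop} {h : ℤ} {l : List Step}
    (H : ∀ u s w, l = u ++ s :: w → c s (h + ht u)) : Ok c h l := by
  induction l generalizing h with
  | nil => trivial
  | cons s l ih =>
    refine ⟨by simpa using H [] s l rfl, ih fun u t w hl => ?_⟩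
    have := H (s :: u) t w (by simp [hl])
    simpa [add_assoc] using this

def cLCS (s : Step) (h : ℤ) : Prop := s = SE ∨ s = SN ∨ (s = SD ∧ h ≤ 0)

def WL (l : List Step) : Prop := Ok cLCS 0 l
def WD (l : List Step) : Prop := (∀ s ∈ l, s = SE ∨ s = SN) ∧ belowPre l
def WS (l : List Step) : Prop := steps3 l ∧ belowPre l

def PathSet (W : List Step → Prop) (n : ℕ) : Set (List Step) :=
  {l | W l ∧ endPt l = ((n : ℤ), (n : ℤ))}

def Prim (l : List Step) : Prop :=
  l ≠ [] ∧ ∀ u w, l = u ++ w → u ≠ [] → w ≠ [] → ht u ≠ 0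

def PrimSet (W : List Step → Prop) (n : ℕ) : Set (List Step) :=
  {l | (W l ∧ endPt l = ((n : ℤ), (n : ℤ))) ∧ Prim l}

lemma steps3_WL {l : List Step} (h : WL l) : steps3 l := by
  unfold WL at h
  generalize hz : (0 : ℤ) = z at h
  clear hz
  induction l generalizing z with
  | nil => intro s hs; simp at hs
  | cons s l ih =>
    intro t ht'
    rw [List.mem_cons] at ht'
    rcases ht' with rfl | h2
    · rcases h.1 with h' | h' | h'
      exacts [Or.inl h', Or.inr (Or.inl h'), Or.inr (Or.inr h'.1)]
    · exact ih _ h.2 t h2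

lemma steps3_WD {l : List Step} (h : WD l) : steps3 l :=
  fun s hs => by rcases h.1 s hs with h' | h' <;> simp [h']

lemma steps3_WS {l : List Step} (h : WS l) : steps3 l := h.1

lemma hv_cases {s : Step} (h : s = SE ∨ s = SN ∨ s = SD) :
    (s = SE ∧ hv s = 1 ∧ s.1 = 1 ∧ s.2 = 0) ∨ (s = SN ∧ hv s = -1 ∧ s.1 = 0 ∧ s.2 = 1) ∨
    (s = SD ∧ hv s = 0 ∧ s.1 = 1 ∧ s.2 = 1) := by
  rcases h with h | h | h <;> subst h <;> simp [hv, SE, SN, SD]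

lemma endPt_nonneg {l : List Step} (h : steps3 l) :
    0 ≤ (endPt l).1 ∧ 0 ≤ (endPt l).2 ∧ (l.length : ℤ) ≤ (endPt l).1 + (endPt l).2 := by
  induction l with
  | nil => simp
  | cons s l ih =>
    have hs := h s (by simp)
    have h3 : steps3 l := fun t htl => h t (by simp [htl])
    have ih' := ih h3
    rcases hv_cases hs with ⟨_, _, h1, h2⟩ | ⟨_, _, h1, h2⟩ | ⟨_, _, h1, h2⟩ <;>
      · rw [endPt_cons]; simp only [List.length_cons, h1, h2]; push_cast; omega

end CSAux
namespace CSAux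

/-! Finiteness -/

def dec3 : Fin 3 → Step
  | 0 => SE
  | 1 => SN
  | 2 => SD
def enc3 : Step → Fin 3 := fun s => if s = SE then 0 else if s = SN then 1 else 2

lemma finite_steps3_len (m : ℕ) : {l : List Step | steps3 l ∧ l.length ≤ m}.Finite := by
  have hsub : {l : List Step | steps3 l ∧ l.length ≤ m} ⊆
      (List.map dec3) '' {l : List (Fin 3) | l.length ≤ m} := by
    rintro l ⟨h3, hlen⟩
    refine ⟨l.map enc3, by simpa using hlen, ?_⟩
    rw [List.map_map]
    have : ∀ s ∈ l, (dec3 ∘ enc3) s = s := by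
      intro s hs
      rcases h3 s hs with h | h | h <;> subst h <;> decide
    calc l.map (dec3 ∘ enc3) = l.map id := List.map_congr_left this
    _ = l := List.map_id l
  exact ((List.finite_length_le (Fin 3) m).image _).subset hsub

lemma finite_pathSet {W : List Step → Prop} (hs : ∀ l, W l → steps3 l) (n : ℕ) :
    (PathSet W n).Finite := by
  refine (finite_steps3_len (2 * n)).subset ?_
  rintro l ⟨hW, hend⟩
  have h3 := hs l hW
  have := (endPt_nonneg h3).2.2
  rw [hend] at this
  exact ⟨h3, by push_cast at this; omega⟩

lemma finite_primSet {W : List Step → Prop} (hs : ∀ l, W l → steps3 l) (n : ℕ) :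
    (PrimSet W n).Finite :=
  (finite_pathSet hs n).subset fun _ h => h.1

lemma ncard_sigma {ι : Type*} [Fintype ι] (f : ι → Type*) [∀ i, Finite (f i)] :
    Nat.card ((i : ι) × f i) = ∑ i, Nat.card (f i) := by
  classical
  letI : ∀ i, Fintype (f i) := fun i => Fintype.ofFinite _
  simp [Nat.card_eq_fintype_card, Fintype.card_sigma]

lemma card_plift (k : ℕ) : Nat.card (PLift (k = 0)) = if k = 0 then 1 else 0 := by
  rcases Nat.eq_zero_or_pos k with rfl | hk
  · simp
  · have : k ≠ 0 := hk.ne'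
    simp only [this, if_false]
    haveI : IsEmpty (PLift (k = 0)) := ⟨fun a => this a.down⟩
    exact Nat.card_of_isEmpty

/-! IVT -/

lemma ivt {l : List Step} {h₀ : ℤ} (hl : steps3 l) (h1 : 1 ≤ h₀) (h2 : h₀ + ht l ≤ 0) :
    ∃ u, u <+: l ∧ h₀ + ht u = 0 := by
  induction l generalizing h₀ with
  | nil => simp at h2; omega
  | cons s l ih =>
    have hs := hl s (by simp)
    have hl' : steps3 l := fun t htl => hl t (by simp [htl])
    rw [ht_cons] at h2
    rcases lt_or_ge 0 (h₀ + hv s) with hpos | hneg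
    · obtain ⟨u, hu, hu0⟩ := ih (h₀ := h₀ + hv s) hl' (by omega) (by omega)
      exact ⟨s :: u, (List.cons_prefix_cons).2 ⟨rfl, hu⟩, by rw [ht_cons]; omega⟩
    · have : h₀ + hv s = 0 := by
        rcases hv_cases hs with ⟨_, he, _⟩ | ⟨_, he, _⟩ | ⟨_, he, _⟩ <;> omega
      exact ⟨[s], ⟨l, rfl⟩, by simpa using this⟩

/-! Split property -/

lemma prefix_append_cases {u A B : List Step} (h : u <+: A ++ B) :
    u <+: A ∨ ∃ u', u = A ++ u' ∧ u' <+: B := by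
  rcases le_or_gt u.length A.length with hle | hlt
  · exact Or.inl (List.prefix_of_prefix_length_le h (A.prefix_append B) hle)
  · have hA : A <+: u :=
      List.prefix_of_prefix_length_le (A.prefix_append B) h hlt.le
    obtain ⟨u', rfl⟩ := hA
    exact Or.inr ⟨u', rfl, (List.prefix_append_right_inj A).1 h⟩

lemma belowPre_split {A B : List Step} (hA : ht A = 0) :
    belowPre (A ++ B) ↔ belowPre A ∧ belowPre B := by
  constructor
  · intro h
    refine ⟨fun u hu => h u (hu.trans (A.prefix_append B)), fun u hu => ?_⟩
    have := h (A ++ u) ((List.prefix_append_right_inj A).2 hu)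
    rwa [ht_append, hA, zero_add] at this
  · rintro ⟨h1, h2⟩ u hu
    rcases prefix_append_cases hu with h | ⟨u', rfl, hu'⟩
    · exact h1 u h
    · rw [ht_append, hA, zero_add]; exact h2 u' hu'

lemma WL_split {A B : List Step} (hA : ht A = 0) : WL (A ++ B) ↔ WL A ∧ WL B := by
  unfold WL
  rw [Ok_append, hA, zero_add]

lemma WD_split {A B : List Step} (hA : ht A = 0) : WD (A ++ B) ↔ WD A ∧ WD B := by
  unfold WD
  rw [belowPre_split hA]
  simp only [List.mem_append]
  constructor
  · rintro ⟨h1, h2, h3⟩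
    exact ⟨⟨fun s hs => h1 s (Or.inl hs), h2⟩, ⟨fun s hs => h1 s (Or.inr hs), h3⟩⟩
  · rintro ⟨⟨h1, h2⟩, ⟨h3, h4⟩⟩
    exact ⟨fun s hs => hs.elim (h1 s) (h3 s), h2, h4⟩

lemma WS_split {A B : List Step} (hA : ht A = 0) : WS (A ++ B) ↔ WS A ∧ WS B := by
  unfold WS steps3
  rw [belowPre_split hA]
  simp only [List.mem_append]
  constructor
  · rintro ⟨h1, h2, h3⟩
    exact ⟨⟨fun s hs => h1 s (Or.inl hs), h2⟩, ⟨fun s hs => h1 s (Or.inr hs), h3⟩⟩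
  · rintro ⟨⟨h1, h2⟩, ⟨h3, h4⟩⟩
    exact ⟨fun s hs => hs.elim (h1 s) (h3 s), h2, h4⟩

/-! Base case -/

lemma pathSet_zero {W : List Step → Prop} (hs : ∀ l, W l → steps3 l) (hnil : W []) :
    PathSet W 0 = {[]} := by
  ext l
  simp only [PathSet, Set.mem_setOf_eq, Set.mem_singleton_iff]
  constructor
  · rintro ⟨hW, hend⟩
    have h := (endPt_nonneg (hs l hW)).2.2
    rw [hend] at h
    have : l.length = 0 := by push_cast at h; omega
    exact List.length_eq_zero_iff.1 this
  · rintro rfl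
    exact ⟨hnil, by simp⟩

lemma card_singleton_list : Nat.card ↥({[]} : Set (List Step)) = 1 := by
  simp

end CSAux
namespace CSAux

lemma prim_eq_of_append {A A' B B' : List Step} (h : A ++ B = A' ++ B')
    (pA : Prim A) (pA' : Prim A') (hA0 : ht A = 0) (hA0' : ht A' = 0) : A = A' := by
  wlog hle : A.length ≤ A'.length generalizing A A' B B'
  · exact (this h.symm pA' pA hA0' hA0 (le_of_not_ge hle)).symm
  have hpre : A <+: A' := List.prefix_of_prefix_length_le ⟨B, h⟩ (A'.prefix_append B') hle
  obtain ⟨C, rfl⟩ := hpre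
  rcases eq_or_ne C [] with rfl | hC
  · simp
  · exact absurd hA0 (pA'.2 A C rfl pA.1 hC)

lemma card_succ {W : List Step → Prop}
    (hsplit : ∀ A B, ht A = 0 → (W (A ++ B) ↔ W A ∧ W B))
    (hs : ∀ l, W l → steps3 l) (n : ℕ) :
    Nat.card ↥(PathSet W (n+1)) =
      ∑ i ∈ range (n+1), Nat.card ↥(PrimSet W (i+1)) * Nat.card ↥(PathSet W (n-i)) := by
  classical
  haveI h1 : ∀ i : Fin (n+1), Finite ↥(PrimSet W (i+1)) :=
    fun i => (finite_primSet hs _).to_subtype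
  haveI h2 : ∀ i : Fin (n+1), Finite ↥(PathSet W (n-i)) :=
    fun i => (finite_pathSet hs _).to_subtype
  have hmem : ∀ (i : Fin (n+1)) (A : ↥(PrimSet W (i+1))) (B : ↥(PathSet W (n-(i:ℕ)))),
      (A.1 ++ B.1) ∈ PathSet W (n+1) := by
    rintro i ⟨A, ⟨⟨hWA, hendA⟩, hprim⟩⟩ ⟨B, ⟨hWB, hendB⟩⟩
    have hin : (i : ℕ) ≤ n := Nat.lt_succ_iff.mp i.2
    have hA0 : ht A = 0 := by rw [ht_eq, hendA]; ring
    refine ⟨(hsplit A B hA0).2 ⟨hWA, hWB⟩, ?_⟩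
    rw [endPt_append, hendA, hendB]
    have : ((n - (i:ℕ) : ℕ) : ℤ) = (n : ℤ) - (i : ℕ) := by
      push_cast [Nat.cast_sub hin]; ring
    simp only [Prod.ext_iff, this]
    constructor <;> push_cast <;> ring
  set f : ((i : Fin (n+1)) × (↥(PrimSet W (i+1)) × ↥(PathSet W (n-(i:ℕ))))) →
      ↥(PathSet W (n+1)) := fun x => ⟨x.2.1.1 ++ x.2.2.1, hmem x.1 x.2.1 x.2.2⟩
  have hbij : Function.Bijective f := by
    constructor
    · rintro ⟨i, ⟨A, hA⟩, ⟨B, hB⟩⟩ ⟨i', ⟨A', hA'⟩, ⟨B', hB'⟩⟩ hxy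
      have hval : A ++ B = A' ++ B' := congrArg Subtype.val hxy
      have hA0 : ht A = 0 := by rw [ht_eq, hA.1.2]; ring
      have hA0' : ht A' = 0 := by rw [ht_eq, hA'.1.2]; ring
      have hAA : A = A' := prim_eq_of_append hval hA.2 hA'.2 hA0 hA0'
      have hii : i = i' := by
        apply Fin.ext
        have e1 := hA.1.2
        rw [hAA, hA'.1.2] at e1
        have e2 := congrArg Prod.fst e1
        push_cast at e2
        omega
      subst hii
      subst hAA
      have hBB : B = B' := List.append_cancel_left hval
      subst hBB
      rfl
    · rintro ⟨l, hW, hend⟩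
      have h3 := hs l hW
      have hne : l ≠ [] := by
        rintro rfl
        have := congrArg Prod.fst hend
        simp only [endPt_nil] at this
        push_cast at this
        omega
      have hex : ∃ k, 0 < k ∧ k ≤ l.length ∧ ht (l.take k) = 0 :=
        ⟨l.length, List.length_pos_iff.2 hne, le_rfl,
          by rw [List.take_length, ht_eq, hend]; ring⟩
      obtain ⟨hj0, hjlen, hjht⟩ := Nat.find_spec hex
      set j := Nat.find hex with hj
      set A := l.take j with hA
      set B := l.drop j with hB
      have hAB : A ++ B = l := List.take_append_drop j l
      have hlenA : A.length = j := by
        rw [hA, List.length_take]; omega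
      have hWAB : W A ∧ W B := (hsplit A B hjht).1 (by rw [hAB]; exact hW)
      have h3A : steps3 A := hs _ hWAB.1
      have h3B : steps3 B := hs _ hWAB.2
      have hendA : (endPt A).1 = (endPt A).2 := by
        have := ht_eq A
        rw [hjht] at this
        omega
      set a : ℤ := (endPt A).1 with ha
      have hApos := endPt_nonneg h3A
      have hA1 : 1 ≤ a := by
        have h2a := hApos.2.2
        rw [← hendA] at h2a
        rw [hlenA] at h2a
        have : (1 : ℤ) ≤ (j : ℤ) := by exact_mod_cast hj0
        omega
      have hendB : endPt B = ((n:ℤ) + 1 - a, (n:ℤ) + 1 - a) := by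
        have h4 := endPt_append A B
        rw [hAB, hend] at h4
        have e1 := congrArg Prod.fst h4
        have e2 := congrArg Prod.snd h4
        simp only [Prod.ext_iff]
        push_cast at e1 e2 ⊢
        omega
      have haU : a ≤ (n:ℤ) + 1 := by
        have := (endPt_nonneg h3B).1
        rw [hendB] at this
        simp at this
        omega
      have hidx : a.toNat - 1 < n + 1 := by omega
      have hcast : ((a.toNat - 1 + 1 : ℕ) : ℤ) = a := by omega
      have hAmem : A ∈ PrimSet W (a.toNat - 1 + 1) := by
        refine ⟨⟨hWAB.1, ?_⟩, ?_, ?_⟩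
        · rw [Prod.ext_iff, hcast]
          exact ⟨rfl, hendA.symm⟩
        · intro hAe
          rw [hAe] at hlenA
          simp at hlenA
          omega
        · rintro u w huw hu hw hht0
          have hul : u.length < j := by
            have hlen2 : u.length + w.length = A.length := by
              rw [huw, List.length_append]
            have : 0 < w.length := List.length_pos_iff.2 hw
            omega
          have hupre : u <+: l := List.IsPrefix.trans ⟨w, huw.symm⟩ ⟨B, hAB⟩
          have hueq : u = l.take u.length := List.prefix_iff_eq_take.1 hupre
          exact Nat.find_min hex hul
            ⟨List.length_pos_iff.2 hu, le_trans hul.le hjlen, by rw [← hueq]; exact hht0⟩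
      have hBmem : B ∈ PathSet W (n - (a.toNat - 1)) := by
        refine ⟨hWAB.2, ?_⟩
        rw [hendB]
        have : ((n - (a.toNat - 1) : ℕ) : ℤ) = (n:ℤ) + 1 - a := by omega
        rw [this]
      exact ⟨⟨⟨a.toNat - 1, hidx⟩, ⟨A, hAmem⟩, ⟨B, hBmem⟩⟩, Subtype.ext hAB⟩
  have hcard := (Nat.card_eq_of_bijective f hbij).symm
  rw [hcard, ncard_sigma]
  rw [← Fin.sum_univ_eq_sum_range
    (fun i => Nat.card ↥(PrimSet W (i+1)) * Nat.card ↥(PathSet W (n-i))) (n+1)]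
  exact Finset.sum_congr rfl fun i _ => Nat.card_prod _ _

end CSAux
namespace CSAux

@[simp] lemma hv_SE : hv SE = 1 := rfl
@[simp] lemma hv_SN : hv SN = -1 := rfl
@[simp] lemma hv_SD : hv SD = 0 := rfl

def abovePre (l : List Step) : Prop := ∀ u, u <+: l → ht u ≤ 0

lemma interior_pos {P : List Step} (h3 : steps3 P) (hprim : Prim P) {rest : List Step}
    (hP : P = SE :: rest) : ∀ u w, P = u ++ w → u ≠ [] → w ≠ [] → 1 ≤ ht u := by
  intro u w huw hu hw
  have hne := hprim.2 u w huw hu hw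
  by_contra hlt
  have hneg : ht u ≤ -1 := by omega
  obtain ⟨u'', rfl⟩ : ∃ u'', u = SE :: u'' := by
    cases u with
    | nil => exact absurd rfl hu
    | cons s u'' =>
      have hPs : P = s :: (u'' ++ w) := by rw [huw]; rfl
      rw [hP] at hPs
      injection hPs with h1 h2
      exact ⟨u'', by rw [← h1]⟩
  have h3u : steps3 u'' := fun s hs => h3 s (by rw [huw]; simp [hs])
  have hhu : ht (SE :: u'') = 1 + ht u'' := by simp
  have hle : (1:ℤ) + ht u'' ≤ 0 := by omega
  obtain ⟨u3, hu3, h30⟩ := ivt h3u le_rfl hle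
  obtain ⟨w3, hw3⟩ := hu3
  have hsplit : P = (SE :: u3) ++ (w3 ++ w) := by rw [huw, ← hw3]; simp
  have hht3 : ht (SE :: u3) = 0 := by simp; omega
  have hwne : w3 ++ w ≠ [] := fun h => hw (by simpa using (List.append_eq_nil_iff.1 h).2)
  exact hprim.2 _ _ hsplit (by simp) hwne hht3

lemma prim_shapeE {P : List Step} {k : ℕ} (h3 : steps3 P)
    (hend : endPt P = ((k:ℤ)+1, (k:ℤ)+1)) (hprim : Prim P) {rest : List Step}
    (hP : P = SE :: rest) :
    ∃ A, P = SE :: A ++ [SN] ∧ endPt A = ((k:ℤ), (k:ℤ)) ∧ steps3 A ∧ belowPre A := by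
  have hrest : rest ≠ [] := by
    rintro rfl
    rw [hP] at hend
    have := congrArg Prod.snd hend
    simp [endPt, SE] at this
    omega
  set A := rest.dropLast with hAdef
  set t := rest.getLast hrest with htdef
  have hre : A ++ [t] = rest := List.dropLast_append_getLast hrest
  have hPA : P = (SE :: A) ++ [t] := by rw [hP, ← hre]; rfl
  have h3t : t = SE ∨ t = SN ∨ t = SD := h3 t (by rw [hPA]; simp)
  have hip := interior_pos h3 hprim hP
  have hSEA : 1 ≤ ht (SE :: A) := hip (SE :: A) [t] hPA (by simp) (by simp)
  have hhtP : ht P = 0 := by rw [ht_eq, hend]; ring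
  have hA' : ht (SE :: A) = 1 + ht A := by simp
  have hht : 1 + ht A + hv t = 0 := by
    rw [hPA, ht_append, hA'] at hhtP
    have h1t : ht [t] = hv t := by simp [ht]
    omega
  have htSN : t = SN := by
    rcases hv_cases h3t with ⟨h, e, _⟩ | ⟨h, e, _⟩ | ⟨h, e, _⟩
    · rw [e] at hht; omega
    · exact h
    · rw [e] at hht; omega
  rw [htSN] at hPA
  have hPA' : P = SE :: A ++ [SN] := hPA
  have hAht : ht A = 0 := by rw [htSN] at hht; simp at hht; omega
  refine ⟨A, hPA', ?_, fun s hs => h3 s (by rw [hPA']; simp [hs]), ?_⟩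
  · rw [hPA'] at hend
    simp [endPt, SE, SN, Prod.ext_iff] at hend ⊢
    omega
  · intro u hu
    obtain ⟨w'', hw''⟩ := hu
    have hsplit : P = (SE :: u) ++ (w'' ++ [SN]) := by rw [hPA', ← hw'']; simp
    have := hip (SE :: u) (w'' ++ [SN]) hsplit (by simp) (by simp)
    simp at this
    omega

lemma prim_SD {P : List Step} {k : ℕ} (hend : endPt P = ((k:ℤ)+1, (k:ℤ)+1))
    (hprim : Prim P) {rest : List Step} (hP : P = SD :: rest) : P = [SD] ∧ k = 0 := by
  have hrest : rest = [] := by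
    by_contra hne
    have hsplit : P = [SD] ++ rest := by rw [hP]; rfl
    exact hprim.2 [SD] rest hsplit (by simp) hne (by simp)
  subst hrest
  rw [hP] at hend
  have := congrArg Prod.fst hend
  simp [endPt, SD] at this
  exact ⟨hP, by omega⟩

/-! Reflection -/

def rf (s : Step) : Step := (s.2, s.1)
def rfl3 (l : List Step) : List Step := l.map rf

@[simp] lemma rf_rf (s : Step) : rf (rf s) = s := rfl
@[simp] lemma rfl3_rfl3 (l : List Step) : rfl3 (rfl3 l) = l := by
  simp [rfl3, List.map_map]
  exact List.map_id l
@[simp] lemma rfl3_nil : rfl3 [] = [] := rfl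
@[simp] lemma rfl3_cons (s : Step) (l : List Step) : rfl3 (s :: l) = rf s :: rfl3 l := rfl
@[simp] lemma rfl3_append (a b : List Step) : rfl3 (a ++ b) = rfl3 a ++ rfl3 b := by
  simp [rfl3]
@[simp] lemma rf_SE : rf SE = SN := rfl
@[simp] lemma rf_SN : rf SN = SE := rfl
@[simp] lemma rf_SD : rf SD = SD := rfl

@[simp] lemma ht_rfl3 (l : List Step) : ht (rfl3 l) = -ht l := by
  induction l with
  | nil => simp
  | cons s l ih => simp [ih, hv, rf]; ring

@[simp] lemma endPt_rfl3 (l : List Step) : endPt (rfl3 l) = ((endPt l).2, (endPt l).1) := by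
  induction l with
  | nil => simp
  | cons s l ih => rw [rfl3_cons, endPt_cons, endPt_cons, ih]; rfl

lemma steps3_rfl3 {l : List Step} (h : steps3 l) : steps3 (rfl3 l) := by
  intro s hs
  obtain ⟨t, htl, rfl⟩ := List.mem_map.1 hs
  rcases h t htl with h' | h' | h' <;> subst h' <;> simp

lemma prim_rfl3 {l : List Step} (h : Prim l) : Prim (rfl3 l) := by
  constructor
  · intro he
    exact h.1 (by simpa [rfl3] using congrArg rfl3 he)
  · intro u w huw hu hw
    have h2 : l = rfl3 u ++ rfl3 w := by
      have := congrArg rfl3 huw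
      simpa using this
    have := h.2 (rfl3 u) (rfl3 w) h2 (by simpa [rfl3] using hu) (by simpa [rfl3] using hw)
    intro h0
    apply this
    have : ht (rfl3 u) = -ht u := ht_rfl3 u
    omega

lemma prim_shapeN {P : List Step} {k : ℕ} (h3 : steps3 P)
    (hend : endPt P = ((k:ℤ)+1, (k:ℤ)+1)) (hprim : Prim P) {rest : List Step}
    (hP : P = SN :: rest) :
    ∃ A, P = SN :: A ++ [SE] ∧ endPt A = ((k:ℤ), (k:ℤ)) ∧ steps3 A ∧ abovePre A := by
  have h3' := steps3_rfl3 h3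
  have hend' : endPt (rfl3 P) = ((k:ℤ)+1, (k:ℤ)+1) := by rw [endPt_rfl3, hend]
  have hprim' := prim_rfl3 hprim
  have hP' : rfl3 P = SE :: rfl3 rest := by rw [hP]; simp
  obtain ⟨A', hPA', hendA', h3A', hbpA'⟩ := prim_shapeE h3' hend' hprim' hP'
  refine ⟨rfl3 A', ?_, ?_, steps3_rfl3 h3A', ?_⟩
  · have := congrArg rfl3 hPA'
    simpa using this
  · rw [endPt_rfl3, hendA']
  · intro u hu
    obtain ⟨w, hw⟩ := hu
    have : rfl3 u ++ rfl3 w = A' := by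
      have := congrArg rfl3 hw
      simpa using this
    have h0 := hbpA' (rfl3 u) ⟨rfl3 w, this⟩
    have : ht (rfl3 u) = -ht u := ht_rfl3 u
    omega

/-! Building primitive pieces -/

lemma split_structE {A u w : List Step} (h : SE :: A ++ [SN] = u ++ w)
    (hu : u ≠ []) (hw : w ≠ []) : ∃ u', u = SE :: u' ∧ u' <+: A := by
  cases u with
  | nil => exact absurd rfl hu
  | cons s u' =>
    simp only [List.cons_append] at h
    injection h with h1 h2
    have hs : s = SE := h1.symm
    have hlen : u'.length ≤ A.length := by
      have := congrArg List.length h2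
      simp at this
      have : 0 < w.length := List.length_pos_iff.2 hw
      omega
    exact ⟨u', by rw [hs],
      List.prefix_of_prefix_length_le ⟨w, h2.symm⟩ (A.prefix_append [SN]) hlen⟩

lemma prim_buildE {A : List Step} {k : ℕ} (hend : endPt A = ((k:ℤ), (k:ℤ)))
    (hbp : belowPre A) :
    endPt (SE :: A ++ [SN]) = ((k:ℤ)+1, (k:ℤ)+1) ∧ Prim (SE :: A ++ [SN]) ∧
      belowPre (SE :: A ++ [SN]) := by
  have hht : ht A = 0 := by rw [ht_eq, hend]; ring
  have hendP : endPt (SE :: A ++ [SN]) = ((k:ℤ)+1, (k:ℤ)+1) := by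
    rw [endPt_append, endPt_cons, hend]
    simp [endPt, SE, SN, Prod.ext_iff]
    omega
  refine ⟨hendP, ⟨by simp, ?_⟩, ?_⟩
  · intro u w huw hu hw
    obtain ⟨u', rfl, hpre⟩ := split_structE huw hu hw
    have := hbp u' hpre
    simp
    omega
  · intro u hu
    rcases eq_or_ne u [] with rfl | hune
    · simp
    obtain ⟨w, hw⟩ := hu
    rcases eq_or_ne w [] with rfl | hwne
    · rw [List.append_nil] at hw
      rw [hw]
      simp
      omega
    · obtain ⟨u', rfl, hpre⟩ := split_structE hw.symm hune hwne
      have := hbp u' hpre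
      simp
      omega

lemma prim_buildN {A : List Step} {k : ℕ} (hend : endPt A = ((k:ℤ), (k:ℤ)))
    (hap : abovePre A) :
    endPt (SN :: A ++ [SE]) = ((k:ℤ)+1, (k:ℤ)+1) ∧ Prim (SN :: A ++ [SE]) := by
  have hbp : belowPre (rfl3 A) := by
    intro u hu
    obtain ⟨w, hw⟩ := hu
    have h2 : rfl3 u ++ rfl3 w = A := by
      have := congrArg rfl3 hw
      simpa using this
    have := hap (rfl3 u) ⟨rfl3 w, h2⟩
    have : ht (rfl3 u) = -ht u := ht_rfl3 u
    omega
  have h2 := prim_buildE (A := rfl3 A) (k := k) (by rw [endPt_rfl3, hend]) hbp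
  have key : rfl3 (SE :: rfl3 A ++ [SN]) = SN :: A ++ [SE] := by simp
  constructor
  · rw [← key, endPt_rfl3, h2.1]
  · rw [← key]
    exact prim_rfl3 h2.2.1

end CSAux
namespace CSAux

lemma cast_succ (k : ℕ) : (((k+1 : ℕ)) : ℤ) = (k:ℤ)+1 := by push_cast; ring

lemma steps3_of_EN {l : List Step} (h : ∀ s ∈ l, s = SE ∨ s = SN) : steps3 l :=
  fun s hs => (h s hs).elim Or.inl (fun h' => Or.inr (Or.inl h'))

lemma Ok_cLCS_of_EN {l : List Step} (h : ∀ s ∈ l, s = SE ∨ s = SN) :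
    ∀ h₀ : ℤ, Ok cLCS h₀ l := by
  induction l with
  | nil => intro h₀; trivial
  | cons s l ih =>
    intro h₀
    refine ⟨?_, ih (fun t htl => h t (by simp [htl])) _⟩
    rcases h s (by simp) with h' | h'
    · exact Or.inl h'
    · exact Or.inr (Or.inl h')

lemma Ok_cLCS_N {A : List Step} (h3 : steps3 A) (hap : abovePre A) :
    WL ((SN :: A) ++ [SE]) := by
  apply Ok_of_at
  intro u s w huw
  cases u with
  | nil =>
    have : SN = s := by
      have h' : SN :: (A ++ [SE]) = s :: w := by simpa using huw
      injection h' with h1 _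
    rw [← this]
    exact Or.inr (Or.inl rfl)
  | cons s0 u' =>
    have h' : SN :: (A ++ [SE]) = s0 :: (u' ++ s :: w) := by simpa using huw
    injection h' with h1 h2
    have hs : s ∈ A ++ [SE] := by rw [h2]; simp
    rw [List.mem_append] at hs
    have hSD : s = SD → ht (s0 :: u') + 0 ≤ 0 := by
      intro _
      have hlen : u'.length ≤ A.length := by
        have := congrArg List.length h2
        simp at this
        omega
      have hu'A : u' <+: A :=
        List.prefix_of_prefix_length_le ⟨s :: w, h2.symm⟩ (A.prefix_append [SE]) hlen
      have := hap u' hu'A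
      rw [← h1]
      simp
      omega
    rcases hs with hs | hs
    · rcases h3 s hs with h' | h' | h'
      · exact Or.inl h'
      · exact Or.inr (Or.inl h')
      · exact Or.inr (Or.inr ⟨h', by have := hSD h'; omega⟩)
    · simp at hs
      exact Or.inl hs

lemma SD_mem_prim {k : ℕ} (hk : k = 0) {W : List Step → Prop} (hW : W [SD]) :
    [SD] ∈ PrimSet W (k+1) := by
  subst hk
  refine ⟨⟨hW, by simp [endPt, SD]⟩, by simp, ?_⟩
  rintro u w huw hu hw
  exfalso
  have := congrArg List.length huw
  simp at this
  rcases List.length_pos_iff.2 hu with _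
  have h1 : 0 < u.length := List.length_pos_iff.2 hu
  have h2 : 0 < w.length := List.length_pos_iff.2 hw
  omega

lemma WS_SD : WS [SD] := by
  refine ⟨fun s hs => by simp at hs; simp [hs], ?_⟩
  intro u hu
  rcases hu with ⟨w, hw⟩
  cases u with
  | nil => simp
  | cons s u' =>
    have : s = SD ∧ u' ++ w = [] := by
      cases w <;> simp_all
    rcases this with ⟨rfl, h2⟩
    have : u' = [] := (List.append_eq_nil_iff.1 h2).1
    subst this
    simp

lemma WL_SD : WL [SD] := ⟨Or.inr (Or.inr ⟨rfl, le_refl 0⟩), trivial⟩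

/-- Primitive pieces for the Dyck lattice. -/
lemma card_prim_WD (k : ℕ) :
    Nat.card ↥(PrimSet WD (k+1)) = Nat.card ↥(PathSet WD k) := by
  have hmem : ∀ A : ↥(PathSet WD k), ((SE :: A.1) ++ [SN]) ∈ PrimSet WD (k+1) := by
    rintro ⟨A, ⟨⟨hEN, hbp⟩, hend⟩⟩
    obtain ⟨h1, h2, h3⟩ := prim_buildE (k := k) hend hbp
    refine ⟨⟨⟨?_, h3⟩, ?_⟩, h2⟩
    · intro s hs
      simp at hs
      rcases hs with rfl | hs | rfl
      · exact Or.inl rfl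
      · exact hEN s hs
      · exact Or.inr rfl
    · rw [h1, cast_succ]
  set f : ↥(PathSet WD k) → ↥(PrimSet WD (k+1)) := fun A => ⟨(SE :: A.1) ++ [SN], hmem A⟩
  refine (Nat.card_eq_of_bijective f ⟨?_, ?_⟩).symm
  · rintro ⟨A, hA⟩ ⟨A', hA'⟩ h
    have := congrArg Subtype.val h
    simp only [f] at this
    have := List.append_cancel_right this
    injection this with _ h2
    exact Subtype.ext h2
  · rintro ⟨P, ⟨⟨hEN, hbp⟩, hend⟩, hprim⟩
    have h3 : steps3 P := steps3_of_EN hEN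
    have hend' : endPt P = ((k:ℤ)+1, (k:ℤ)+1) := by rw [hend, cast_succ]
    have hne : P ≠ [] := hprim.1
    obtain ⟨s, rest, rfl⟩ := List.exists_cons_of_ne_nil hne
    have hs := hEN s (by simp)
    rcases hs with rfl | rfl
    · obtain ⟨A, hPA, hendA, h3A, hbpA⟩ := prim_shapeE h3 hend' hprim rfl
      refine ⟨⟨A, ⟨⟨fun t htA => hEN t (by rw [hPA]; simp [htA]), hbpA⟩, hendA⟩⟩, ?_⟩
      exact Subtype.ext hPA.symm
    · exfalso
      have := hbp [SN] ⟨rest, rfl⟩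
      simp at this

/-- Primitive pieces for the Schröder lattice. -/
lemma card_prim_WS (k : ℕ) :
    Nat.card ↥(PrimSet WS (k+1)) =
      Nat.card ↥(PathSet WS k) + (if k = 0 then 1 else 0) := by
  haveI : Finite ↥(PathSet WS k) := (finite_pathSet (fun _ h => steps3_WS h) k).to_subtype
  have hmem : ∀ A : ↥(PathSet WS k), ((SE :: A.1) ++ [SN]) ∈ PrimSet WS (k+1) := by
    rintro ⟨A, ⟨⟨h3A, hbp⟩, hend⟩⟩
    obtain ⟨h1, h2, h3⟩ := prim_buildE (k := k) hend hbp
    refine ⟨⟨⟨?_, h3⟩, ?_⟩, h2⟩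
    · intro s hs
      simp at hs
      rcases hs with rfl | hs | rfl
      · exact Or.inl rfl
      · exact h3A s hs
      · exact Or.inr (Or.inl rfl)
    · rw [h1, cast_succ]
  set f : ↥(PathSet WS k) ⊕ PLift (k = 0) → ↥(PrimSet WS (k+1)) := fun x =>
    match x with
    | Sum.inl A => ⟨(SE :: A.1) ++ [SN], hmem A⟩
    | Sum.inr h => ⟨[SD], SD_mem_prim h.down WS_SD⟩
  have hbij : Function.Bijective f := by
    constructor
    · rintro (⟨A, hA⟩ | ⟨hk⟩) (⟨A', hA'⟩ | ⟨hk'⟩) h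
      · have := congrArg Subtype.val h
        simp only [f] at this
        have := List.append_cancel_right this
        injection this with _ h2
        exact congrArg Sum.inl (Subtype.ext h2)
      · exfalso
        have := congrArg Subtype.val h
        simp only [f] at this
        have := congrArg List.length this
        simp at this
      · exfalso
        have := congrArg Subtype.val h
        simp only [f] at this
        have := congrArg List.length this
        simp at this
      · exact congrArg Sum.inr (Subsingleton.elim _ _)
    · rintro ⟨P, ⟨⟨h3, hbp⟩, hend⟩, hprim⟩
      have hend' : endPt P = ((k:ℤ)+1, (k:ℤ)+1) := by rw [hend, cast_succ]
      have hne : P ≠ [] := hprim.1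
      obtain ⟨s, rest, rfl⟩ := List.exists_cons_of_ne_nil hne
      rcases h3 s (by simp) with rfl | rfl | rfl
      · obtain ⟨A, hPA, hendA, h3A, hbpA⟩ := prim_shapeE h3 hend' hprim rfl
        exact ⟨Sum.inl ⟨A, ⟨⟨h3A, hbpA⟩, hendA⟩⟩, Subtype.ext hPA.symm⟩
      · exfalso
        have := hbp [SN] ⟨rest, rfl⟩
        simp at this
      · obtain ⟨hP, hk⟩ := prim_SD hend' hprim rfl
        exact ⟨Sum.inr (PLift.up hk), Subtype.ext hP.symm⟩
  rw [← Nat.card_eq_of_bijective f hbij, Nat.card_sum, card_plift]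

/-- Primitive pieces for the Catalan–Schröder lattice. -/
lemma card_prim_WL (k : ℕ) :
    Nat.card ↥(PrimSet WL (k+1)) =
      Nat.card ↥(PathSet WD k) + Nat.card ↥(PathSet WS k) + (if k = 0 then 1 else 0) := by
  haveI : Finite ↥(PathSet WD k) := (finite_pathSet (fun _ h => steps3_WD h) k).to_subtype
  haveI : Finite ↥(PathSet WS k) := (finite_pathSet (fun _ h => steps3_WS h) k).to_subtype
  have hmemD : ∀ A : ↥(PathSet WD k), ((SE :: A.1) ++ [SN]) ∈ PrimSet WL (k+1) := by
    rintro ⟨A, ⟨⟨hEN, hbp⟩, hend⟩⟩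
    obtain ⟨h1, h2, _⟩ := prim_buildE (k := k) hend hbp
    refine ⟨⟨?_, by rw [h1, cast_succ]⟩, h2⟩
    apply Ok_cLCS_of_EN
    intro s hs
    simp at hs
    rcases hs with rfl | hs | rfl
    · exact Or.inl rfl
    · exact hEN s hs
    · exact Or.inr rfl
  have hmemS : ∀ B : ↥(PathSet WS k), ((SN :: rfl3 B.1) ++ [SE]) ∈ PrimSet WL (k+1) := by
    rintro ⟨B, ⟨⟨h3B, hbp⟩, hend⟩⟩
    have hendA : endPt (rfl3 B) = ((k:ℤ), (k:ℤ)) := by rw [endPt_rfl3, hend]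
    have hap : abovePre (rfl3 B) := by
      intro u hu
      obtain ⟨w, hw⟩ := hu
      have h2 : rfl3 u ++ rfl3 w = B := by
        have := congrArg rfl3 hw
        simpa using this
      have := hbp (rfl3 u) ⟨rfl3 w, h2⟩
      have h4 : ht (rfl3 u) = -ht u := ht_rfl3 u
      omega
    obtain ⟨h1, h2⟩ := prim_buildN (k := k) hendA hap
    exact ⟨⟨Ok_cLCS_N (steps3_rfl3 h3B) hap, by rw [h1, cast_succ]⟩, h2⟩
  set f : ↥(PathSet WD k) ⊕ ↥(PathSet WS k) ⊕ PLift (k = 0) → ↥(PrimSet WL (k+1)) := fun x =>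
    match x with
    | Sum.inl A => ⟨(SE :: A.1) ++ [SN], hmemD A⟩
    | Sum.inr (Sum.inl B) => ⟨(SN :: rfl3 B.1) ++ [SE], hmemS B⟩
    | Sum.inr (Sum.inr h) => ⟨[SD], SD_mem_prim h.down WL_SD⟩
  have hbij : Function.Bijective f := by
    constructor
    · rintro (⟨A, hA⟩ | ⟨B, hB⟩ | ⟨hk⟩) (⟨A', hA'⟩ | ⟨B', hB'⟩ | ⟨hk'⟩) h <;>
        have hval := congrArg Subtype.val h <;>
        simp only [f, List.cons_append] at hval
      · have := List.append_cancel_right (show (SE :: A) ++ [SN] = (SE :: A') ++ [SN] by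
          simpa using hval)
        injection this with _ h2
        exact congrArg Sum.inl (Subtype.ext h2)
      · exfalso
        injection hval with h1 _
        simp [SE, SN, Prod.ext_iff] at h1
      · exfalso
        injection hval with h1 _
        simp [SE, SD, Prod.ext_iff] at h1
      · exfalso
        injection hval with h1 _
        simp [SE, SN, Prod.ext_iff] at h1
      · have := List.append_cancel_right (show (SN :: rfl3 B) ++ [SE] = (SN :: rfl3 B') ++ [SE] by
          simpa using hval)
        injection this with _ h2
        have hBB : B = B' := by
          have := congrArg rfl3 h2
          simpa using this
        exact congrArg Sum.inr (congrArg Sum.inl (Subtype.ext hBB))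
      · exfalso
        injection hval with h1 _
        simp [SN, SD, Prod.ext_iff] at h1
      · exfalso
        injection hval with h1 _
        simp [SE, SD, Prod.ext_iff] at h1
      · exfalso
        injection hval with h1 _
        simp [SN, SD, Prod.ext_iff] at h1
      · exact congrArg Sum.inr (congrArg Sum.inr (Subsingleton.elim _ _))
    · rintro ⟨P, ⟨hWL, hend⟩, hprim⟩
      have h3 : steps3 P := steps3_WL hWL
      have hend' : endPt P = ((k:ℤ)+1, (k:ℤ)+1) := by rw [hend, cast_succ]
      have hne : P ≠ [] := hprim.1
      obtain ⟨s, rest, rfl⟩ := List.exists_cons_of_ne_nil hne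
      rcases h3 s (by simp) with rfl | rfl | rfl
      · obtain ⟨A, hPA, hendA, h3A, hbpA⟩ := prim_shapeE h3 hend' hprim rfl
        have hAEN : ∀ t ∈ A, t = SE ∨ t = SN := by
          intro t htA
          rcases h3A t htA with h' | h' | h'
          · exact Or.inl h'
          · exact Or.inr h'
          · exfalso
            obtain ⟨u', w', hA'⟩ := List.append_of_mem htA
            have hsplit : SE :: rest = (SE :: u') ++ (SD :: (w' ++ [SN])) := by
              rw [hPA, hA', h']
              simp
            have hok := Ok_at hWL hsplit
            rcases hok with h'' | h'' | h''
            · exact absurd h'' (by simp [SD, SE, Prod.ext_iff])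
            · exact absurd h'' (by simp [SD, SN, Prod.ext_iff])
            · have h5 := hbpA u' ⟨SD :: w', by rw [hA', h']⟩
              have h6 := h''.2
              simp at h6
              omega
        exact ⟨Sum.inl ⟨A, ⟨⟨hAEN, hbpA⟩, hendA⟩⟩, Subtype.ext hPA.symm⟩
      · obtain ⟨A, hPA, hendA, h3A, hapA⟩ := prim_shapeN h3 hend' hprim rfl
        have hBmem : rfl3 A ∈ PathSet WS k := by
          refine ⟨⟨steps3_rfl3 h3A, ?_⟩, by rw [endPt_rfl3, hendA]⟩
          intro u hu
          obtain ⟨w, hw⟩ := hu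
          have h2 : rfl3 u ++ rfl3 w = A := by
            have := congrArg rfl3 hw
            simpa using this
          have := hapA (rfl3 u) ⟨rfl3 w, h2⟩
          have h4 : ht (rfl3 u) = -ht u := ht_rfl3 u
          omega
        refine ⟨Sum.inr (Sum.inl ⟨rfl3 A, hBmem⟩), Subtype.ext ?_⟩
        simp only [f]
        rw [rfl3_rfl3]
        exact hPA.symm
      · obtain ⟨hP, hk⟩ := prim_SD hend' hprim rfl
        exact ⟨Sum.inr (Sum.inr (PLift.up hk)), Subtype.ext hP.symm⟩
  rw [← Nat.card_eq_of_bijective f hbij, Nat.card_sum, Nat.card_sum, card_plift, add_assoc]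

end CSAux
namespace CSAux

lemma WD_nil : WD [] :=
  ⟨fun s hs => absurd hs List.not_mem_nil, fun u hu => by rw [List.prefix_nil.mp hu]; simp⟩

lemma WS_nil : WS [] :=
  ⟨fun s hs => absurd hs List.not_mem_nil, fun u hu => by rw [List.prefix_nil.mp hu]; simp⟩

lemma WL_nil : WL [] := trivial

lemma card_pathSet_zero {W : List Step → Prop} (hs : ∀ l, W l → steps3 l) (hnil : W []) :
    Nat.card ↥(PathSet W 0) = 1 := by
  rw [pathSet_zero hs hnil]
  haveI := Set.uniqueSingleton ([] : List Step)
  exact Nat.card_unique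

lemma card_WD (n : ℕ) : Nat.card ↥(PathSet WD n) = catalan n := by
  induction n using Nat.strong_induction_on with
  | _ n ih =>
    match n with
    | 0 => rw [card_pathSet_zero (fun _ h => steps3_WD h) WD_nil, catalan_zero]
    | n + 1 =>
      rw [card_succ (fun A B hA => WD_split hA) (fun _ h => steps3_WD h) n]
      have hc : ∀ i ∈ range (n+1),
          Nat.card ↥(PrimSet WD (i+1)) * Nat.card ↥(PathSet WD (n-i)) =
            catalan i * catalan (n-i) := by
        intro i hi
        rw [mem_range] at hi
        rw [card_prim_WD, ih i (by omega), ih (n-i) (by omega)]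
      rw [Finset.sum_congr rfl hc, catalan_succ]
      exact (Fin.sum_univ_eq_sum_range (fun i => catalan i * catalan (n-i)) (n+1)).symm

lemma card_WS (n : ℕ) : Nat.card ↥(PathSet WS n) = schroeder n := by
  induction n using Nat.strong_induction_on with
  | _ n ih =>
    match n with
    | 0 => rw [card_pathSet_zero (fun _ h => steps3_WS h) WS_nil, schroeder]
    | n + 1 =>
      rw [card_succ (fun A B hA => WS_split hA) (fun _ h => steps3_WS h) n]
      have hc : ∀ i ∈ range (n+1),
          Nat.card ↥(PrimSet WS (i+1)) * Nat.card ↥(PathSet WS (n-i)) =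
            schroeder i * schroeder (n-i) + (if i = 0 then schroeder n else 0) := by
        intro i hi
        rw [mem_range] at hi
        rw [card_prim_WS, ih i (by omega), ih (n-i) (by omega), add_mul]
        congr 1
        split
        · rename_i h0
          subst h0
          simp
        · simp_all
      rw [Finset.sum_congr rfl hc, Finset.sum_add_distrib, Finset.sum_ite_eq' (range (n+1)) 0
        (fun _ => schroeder n)]
      simp only [Finset.mem_range, Nat.succ_pos, if_true, Nat.zero_lt_succ]
      rw [show schroeder (n+1) = schroeder n + ∑ i : Fin (n+1), schroeder i * schroeder (n-i)
        from by rw [schroeder],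
        ← Fin.sum_univ_eq_sum_range (fun i => schroeder i * schroeder (n-i)) (n+1)]
      ring

lemma card_WL_zero : Nat.card ↥(PathSet WL 0) = 1 :=
  card_pathSet_zero (fun _ h => steps3_WL h) WL_nil

lemma card_WL_succ (n : ℕ) :
    Nat.card ↥(PathSet WL (n+1)) =
      ∑ i ∈ range (n+1),
        (catalan i + schroeder i + if i = 0 then 1 else 0) * Nat.card ↥(PathSet WL (n-i)) := by
  rw [card_succ (fun A B hA => WL_split hA) (fun _ h => steps3_WL h) n]
  refine Finset.sum_congr rfl fun i _ => ?_
  rw [card_prim_WL, card_WD, card_WS]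

/-! Connection to `LCS`. -/

lemma okFrom_iff (p : ℤ × ℤ) (l : List Step) :
    okFrom (fun q => q.1 ≤ q.2) p l ↔ Ok cLCS (p.1 - p.2) l := by
  induction l generalizing p with
  | nil => simp [okFrom]
  | cons s l ih =>
    show (_ ∧ _) ↔ _ ∧ _
    have harith : p.1 - p.2 + hv s = (p.1 + s.1) - (p.2 + s.2) := by
      simp [hv]; ring
    constructor
    · rintro ⟨h1, h2⟩
      refine ⟨?_, ?_⟩
      · rcases h1 with h | h | ⟨h, hD⟩
        · exact Or.inl h
        · exact Or.inr (Or.inl h)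
        · exact Or.inr (Or.inr ⟨h, by omega⟩)
      · rw [harith]
        exact (ih _).1 h2
    · rintro ⟨h1, h2⟩
      refine ⟨?_, ?_⟩
      · rcases h1 with h | h | ⟨h, hD⟩
        · exact Or.inl h
        · exact Or.inr (Or.inl h)
        · exact Or.inr (Or.inr ⟨h, by omega⟩)
      · exact (ih _).2 (by rw [← harith]; exact h2)

lemma LCS_eq (n : ℕ) : LCS n n = PathSet WL n := by
  ext l
  constructor
  · rintro ⟨h1, h2⟩
    exact ⟨by have := (okFrom_iff (0,0) l).1 h1; simpa [WL] using this, h2⟩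
  · rintro ⟨h1, h2⟩
    exact ⟨(okFrom_iff (0,0) l).2 (by simpa [WL] using h1), h2⟩

lemma fCS_eq (n : ℕ) : fCS n = Nat.card ↥(PathSet WL n) := by
  rw [fCS, LCS_eq]

lemma fCS_zero : fCS 0 = 1 := by rw [fCS_eq]; exact card_WL_zero

lemma fCS_succ (n : ℕ) :
    fCS (n+1) = ∑ i ∈ range (n+1),
      (catalan i + schroeder i + if i = 0 then 1 else 0) * fCS (n-i) := by
  rw [fCS_eq, card_WL_succ]
  exact Finset.sum_congr rfl fun i _ => by rw [fCS_eq]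

end CSAux
namespace CSAux

lemma key_rec (n : ℕ) : (fCS (n+1) : ℤ) =
    ∑ i ∈ range (n+1), ((catalan i : ℤ) + schroeder i + if i = 0 then 1 else 0) * fCS (n-i) := by
  rw [fCS_succ, Nat.cast_sum]
  refine Finset.sum_congr rfl fun i _ => ?_
  rcases eq_or_ne i 0 with rfl | h
  · rw [if_pos rfl, if_pos rfl]
    push_cast
    ring
  · rw [if_neg h, if_neg h]
    push_cast
    ring

end CSAux

open CSAux in
theorem F_gf_aux :
    FGF * (1 - PowerSeries.X * (catalanGF + schroederGF + 1)) = 1 := by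
  have hF : ∀ m : ℕ, PowerSeries.coeff m FGF = (fCS m : ℤ) := fun m => by
    rw [FGF, PowerSeries.coeff_mk]
  have hG0 : PowerSeries.coeff 0 (1 - PowerSeries.X * (catalanGF + schroederGF + 1)) = 1 := by
    rw [map_sub, PowerSeries.coeff_one, PowerSeries.coeff_zero_X_mul]
    simp
  have hG : ∀ m : ℕ,
      PowerSeries.coeff (m+1) (1 - PowerSeries.X * (catalanGF + schroederGF + 1))
      = -((catalan m : ℤ) + (schroeder m : ℤ) + if m = 0 then 1 else 0) := by
    intro m
    rw [map_sub, PowerSeries.coeff_one, PowerSeries.coeff_succ_X_mul, map_add, map_add,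
      PowerSeries.coeff_one, catalanGF, schroederGF, PowerSeries.coeff_mk, PowerSeries.coeff_mk]
    simp
  apply PowerSeries.ext
  intro n
  match n with
  | 0 =>
    rw [PowerSeries.coeff_mul, Finset.Nat.antidiagonal_zero, Finset.sum_singleton,
      hF, hG0, CSAux.fCS_zero, PowerSeries.coeff_one]
    simp
  | n + 1 =>
    rw [PowerSeries.coeff_mul, Finset.Nat.sum_antidiagonal_eq_sum_range_succ_mk,
      PowerSeries.coeff_one]
    simp only [Nat.succ_ne_zero, if_false]
    rw [Finset.sum_range_succ]
    have hmain : ∀ k ∈ range (n+1),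
        PowerSeries.coeff k FGF *
          PowerSeries.coeff (n+1-k) (1 - PowerSeries.X * (catalanGF + schroederGF + 1))
        = -(((catalan (n-k) : ℤ) + schroeder (n-k) + if n-k = 0 then 1 else 0) * fCS k) := by
      intro k hk
      rw [mem_range] at hk
      have h1 : n+1-k = (n-k)+1 := by omega
      rw [h1, hF, hG (n-k)]
      ring
    rw [Finset.sum_congr rfl hmain, Nat.sub_self, hF, hG0, mul_one]
    have hrefl := Finset.sum_range_reflect
      (fun j => ((catalan j : ℤ) + schroeder j + if j = 0 then 1 else 0) * fCS (n-j)) (n+1)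
    have hsum : ∑ k ∈ range (n+1),
        ((catalan (n-k) : ℤ) + schroeder (n-k) + if n-k = 0 then 1 else 0) * fCS k
        = (fCS (n+1) : ℤ) := by
      rw [key_rec n, ← hrefl]
      refine Finset.sum_congr rfl fun k hk => ?_
      rw [mem_range] at hk
      have h1 : n + 1 - 1 - k = n - k := by omega
      have h2 : n - (n - k) = k := by omega
      rw [h1, h2]
    rw [Finset.sum_neg_distrib, hsum]
    ring

/-- F(x)·(1 − x·(C(x)+S(x)+1)) = 1 in ℤ[[x]]. -/
theorem F_gf :
    FGF * (1 - PowerSeries.X * (catalanGF + schroederGF + 1)) = 1 := F_gf_aux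
end

section
/- Let f*_n count paths from (0,0) to (n,n) in the lattice L*_CS, where steps (1,0),(0,1) are allowed everywhere and (1,1) is allowed only from points (a,b) with b > a. Then f*_0 = 1 and f*_n = Σ_{k=1}^{n} (C_{k-1} + S_{k-1})·f*_{n-k} for n ≥ 1, where C_m and S_m are the Catalan and large Schröder numbers. -/
open Finset PowerSeries

/- ===================== Auxiliary development ===================== -/

namespace CS

abbrev X : ℤ × ℤ := (1, 0)
abbrev Y : ℤ × ℤ := (0, 1)
abbrev Z : ℤ × ℤ := (1, 1)

/-- Offset change of a step. -/
def dOff (s : ℤ × ℤ) : ℤ := s.2 - s.1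

/-- Validity of a path in terms of the current diagonal offset `d = y - x`. -/
def valid (allow : ℤ → ℤ × ℤ → Prop) : ℤ → List (ℤ × ℤ) → Prop
  | _, [] => True
  | d, s :: l => allow d s ∧ valid allow (d + dOff s) l

/-- Total offset change of a path. -/
def off (l : List (ℤ × ℤ)) : ℤ := (endPt l).2 - (endPt l).1

@[simp] lemma endPt_nil : endPt [] = (0, 0) := rfl

lemma endPt_cons (s : ℤ × ℤ) (l : List (ℤ × ℤ)) :
    endPt (s :: l) = (s.1 + (endPt l).1, s.2 + (endPt l).2) := by
  simp [endPt]

lemma endPt_append (l1 l2 : List (ℤ × ℤ)) :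
    endPt (l1 ++ l2) = ((endPt l1).1 + (endPt l2).1, (endPt l1).2 + (endPt l2).2) := by
  simp [endPt]

@[simp] lemma off_nil : off [] = 0 := rfl

lemma off_cons (s : ℤ × ℤ) (l : List (ℤ × ℤ)) : off (s :: l) = dOff s + off l := by
  simp [off, endPt_cons, dOff]; ring

lemma off_append (l1 l2 : List (ℤ × ℤ)) : off (l1 ++ l2) = off l1 + off l2 := by
  simp [off, endPt_append]; ring

@[simp] lemma valid_nil (allow : ℤ → ℤ × ℤ → Prop) (d : ℤ) : valid allow d [] := trivial

lemma valid_cons {allow : ℤ → ℤ × ℤ → Prop} {d : ℤ} {s : ℤ × ℤ} {l : List (ℤ × ℤ)} :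
    valid allow d (s :: l) ↔ allow d s ∧ valid allow (d + dOff s) l := Iff.rfl

lemma valid_append {allow : ℤ → ℤ × ℤ → Prop} (l1 l2 : List (ℤ × ℤ)) (d : ℤ) :
    valid allow d (l1 ++ l2) ↔ valid allow d l1 ∧ valid allow (d + off l1) l2 := by
  induction l1 generalizing d with
  | nil => simp
  | cons s t ih => simp [valid_cons, ih, off_cons, and_assoc, add_assoc]

lemma valid_shift {a1 a2 : ℤ → ℤ × ℤ → Prop} {t : ℤ}
    (h : ∀ d s, a1 d s ↔ a2 (d + t) s) :
    ∀ (l : List (ℤ × ℤ)) (d : ℤ), valid a1 d l ↔ valid a2 (d + t) l := by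
  intro l
  induction l with
  | nil => simp
  | cons s u ih =>
    intro d
    rw [valid_cons, valid_cons, h, ih]
    have : d + dOff s + t = d + t + dOff s := by ring
    rw [this]

lemma valid_steps {allow : ℤ → ℤ × ℤ → Prop}
    (hst : ∀ d s, allow d s → s = X ∨ s = Y ∨ s = Z) :
    ∀ (l : List (ℤ × ℤ)) (d : ℤ), valid allow d l → ∀ s ∈ l, s = X ∨ s = Y ∨ s = Z := by
  intro l
  induction l with
  | nil => simp
  | cons s u ih =>
    intro d hv r hr
    rcases List.mem_cons.1 hr with h | h
    · exact h ▸ hst d s hv.1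
    · exact ih _ hv.2 r h

/-- Coordinates of the endpoint of a triple-step path are nonnegative. -/
lemma endPt_nonneg {l : List (ℤ × ℤ)} (hl : ∀ s ∈ l, s = X ∨ s = Y ∨ s = Z) :
    0 ≤ (endPt l).1 ∧ 0 ≤ (endPt l).2 := by
  induction l with
  | nil => simp
  | cons s u ih =>
    have hs := hl s List.mem_cons_self
    have hu := ih (fun r hr => hl r (List.mem_cons_of_mem s hr))
    rw [endPt_cons]
    rcases hs with h | h | h <;> subst h <;>
      constructor <;> simp <;> omega

/-- Length bound for triple-step paths. -/
lemma length_le {l : List (ℤ × ℤ)} (hl : ∀ s ∈ l, s = X ∨ s = Y ∨ s = Z) :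
    (l.length : ℤ) ≤ (endPt l).1 + (endPt l).2 := by
  induction l with
  | nil => simp
  | cons s u ih =>
    have hs := hl s List.mem_cons_self
    have hu := ih (fun r hr => hl r (List.mem_cons_of_mem s hr))
    rw [endPt_cons]
    rcases hs with h | h | h <;> subst h <;> simp <;> omega

/-- Triple-step paths with endpoint `(0,0)` are empty. -/
lemma eq_nil_of_endPt_zero {l : List (ℤ × ℤ)} (hl : ∀ s ∈ l, s = X ∨ s = Y ∨ s = Z)
    (h : endPt l = (0, 0)) : l = [] := by
  have hlen := length_le hl
  rw [h] at hlen
  have : l.length = 0 := by omega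
  exact List.length_eq_zero_iff.1 this

end CS
namespace CS

/-- Finset of triple-step lists of length at most `N`. -/
def listsLe : ℕ → Finset (List (ℤ × ℤ))
  | 0 => {[]}
  | N + 1 => {[]} ∪ (({X, Y, Z} : Finset (ℤ × ℤ)) ×ˢ listsLe N).image (fun p => p.1 :: p.2)

lemma mem_listsLe : ∀ (N : ℕ) (l : List (ℤ × ℤ)), l.length ≤ N →
    (∀ s ∈ l, s = X ∨ s = Y ∨ s = Z) → l ∈ listsLe N := by
  intro N
  induction N with
  | zero =>
    intro l hl _
    simp at hl
    simp [listsLe, hl]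
  | succ N ih =>
    intro l hl hst
    cases l with
    | nil => simp [listsLe]
    | cons s t =>
      have ht : t ∈ listsLe N := ih t (by simp at hl; omega)
        (fun r hr => hst r (List.mem_cons_of_mem s hr))
      have hs := hst s List.mem_cons_self
      simp only [listsLe, Finset.mem_union, Finset.mem_image, Finset.mem_product]
      right
      exact ⟨(s, t), ⟨by simp [hs.imp id (Or.imp id id)] <;> tauto, ht⟩, rfl⟩

/-- Paths counted in the general framework. -/
def PSet (allow : ℤ → ℤ × ℤ → Prop) (n k : ℤ) : Set (List (ℤ × ℤ)) :=
  {l | valid allow 0 l ∧ endPt l = (n, k)}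

/-- Primitive diagonal-to-diagonal paths: nonempty, and no interior diagonal visit. -/
def PrimSet (allow : ℤ → ℤ × ℤ → Prop) (n : ℤ) : Set (List (ℤ × ℤ)) :=
  {l | valid allow 0 l ∧ endPt l = (n, n) ∧ l ≠ [] ∧
    ∀ m : ℕ, 0 < m → m < l.length → off (l.take m) ≠ 0}

lemma PSet_finite {allow : ℤ → ℤ × ℤ → Prop}
    (hst : ∀ d s, allow d s → s = X ∨ s = Y ∨ s = Z) (n k : ℤ) :
    (PSet allow n k).Finite := by
  apply Set.Finite.subset (listsLe (n + k).toNat).finite_toSet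
  intro l hl
  obtain ⟨hv, he⟩ := hl
  have hsteps := valid_steps hst l 0 hv
  have hlen := length_le hsteps
  rw [he] at hlen
  exact mem_listsLe _ l (by omega) hsteps

lemma PrimSet_subset {allow : ℤ → ℤ × ℤ → Prop} (n : ℤ) :
    PrimSet allow n ⊆ PSet allow n n := fun l hl => ⟨hl.1, hl.2.1⟩

lemma PrimSet_finite {allow : ℤ → ℤ × ℤ → Prop}
    (hst : ∀ d s, allow d s → s = X ∨ s = Y ∨ s = Z) (n : ℤ) :
    (PrimSet allow n).Finite :=
  (PSet_finite hst n n).subset (PrimSet_subset n)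

@[simp] lemma PSet_zero {allow : ℤ → ℤ × ℤ → Prop}
    (hst : ∀ d s, allow d s → s = X ∨ s = Y ∨ s = Z) :
    PSet allow 0 0 = {[]} := by
  ext l
  constructor
  · rintro ⟨hv, he⟩
    exact eq_nil_of_endPt_zero (valid_steps hst l 0 hv) he
  · rintro rfl
    exact ⟨trivial, rfl⟩

end CS
namespace CS

lemma off_of_endPt_diag {l : List (ℤ × ℤ)} {k : ℤ} (h : endPt l = (k, k)) : off l = 0 := by
  simp [off, h]

/-- Uniqueness of the first-return decomposition. -/
lemma prim_append_eq {allow : ℤ → ℤ × ℤ → Prop} :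
    ∀ {k1 k2 : ℤ} {p1 p2 q1 q2 : List (ℤ × ℤ)},
    p1 ∈ PrimSet allow k1 → p2 ∈ PrimSet allow k2 → p1 ++ q1 = p2 ++ q2 →
    p1 = p2 ∧ q1 = q2 := by
  have aux : ∀ {k1 k2 : ℤ} {p1 p2 q1 q2 : List (ℤ × ℤ)},
      p1 ∈ PrimSet allow k1 → p2 ∈ PrimSet allow k2 → p1 ++ q1 = p2 ++ q2 →
      p1.length ≤ p2.length → p1 = p2 := by
    intro k1 k2 p1 p2 q1 q2 hp1 hp2 h hle
    have hp1take : p1 = (p2 ++ q2).take p1.length := by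
      rw [← h, List.take_left]
    have htake : p1 = p2.take p1.length := by
      conv_lhs => rw [hp1take]
      rw [List.take_append_of_le_length hle]
    have hoff : off p1 = 0 := off_of_endPt_diag hp1.2.1
    have hpos : 0 < p1.length := List.length_pos_iff.2 hp1.2.2.1
    rcases lt_or_eq_of_le hle with hlt | heq
    · exact absurd (htake ▸ hoff) (hp2.2.2.2 p1.length hpos hlt)
    · have h2 := htake
      rw [heq, List.take_length] at h2
      exact h2
  intro k1 k2 p1 p2 q1 q2 hp1 hp2 h
  have hpp : p1 = p2 := by
    rcases le_total p1.length p2.length with hle | hle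
    · exact aux hp1 hp2 h hle
    · exact (aux hp2 hp1 h.symm hle).symm
  exact ⟨hpp, by rw [hpp] at h; exact List.append_cancel_left h⟩

/-- The first-return decomposition of a nonempty diagonal path. -/
lemma exists_prim_decomp {allow : ℤ → ℤ × ℤ → Prop}
    (hst : ∀ d s, allow d s → s = X ∨ s = Y ∨ s = Z) {n : ℕ} (hn : 1 ≤ n)
    {l : List (ℤ × ℤ)} (hl : l ∈ PSet allow (n : ℤ) (n : ℤ)) :
    ∃ k : ℕ, k ∈ Finset.Icc 1 n ∧ ∃ p q : List (ℤ × ℤ),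
      p ∈ PrimSet allow (k : ℤ) ∧ q ∈ PSet allow ((n : ℤ) - k) ((n : ℤ) - k) ∧
      p ++ q = l := by
  classical
  obtain ⟨hv, he⟩ := hl
  have hsteps := valid_steps hst l 0 hv
  have hlnil : l ≠ [] := by
    intro h
    rw [h] at he
    simp [endPt_nil, Prod.ext_iff] at he
    omega
  have hlenpos : 0 < l.length := List.length_pos_iff.2 hlnil
  have hJ : ∃ m : ℕ, 0 < m ∧ m ≤ l.length ∧ off (l.take m) = 0 := by
    refine ⟨l.length, hlenpos, le_refl _, ?_⟩
    rw [List.take_length]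
    exact off_of_endPt_diag he
  set j := Nat.find hJ with hjdef
  obtain ⟨hjpos, hjle, hjoff⟩ := Nat.find_spec hJ
  set p := l.take j with hpdef
  set q := l.drop j with hqdef
  have hpq : p ++ q = l := List.take_append_drop j l
  have hvpq : valid allow 0 (p ++ q) := by rw [hpq]; exact hv
  rw [valid_append] at hvpq
  obtain ⟨hvp, hvq⟩ := hvpq
  rw [hjoff] at hvq
  -- endpoint of p
  have hpsteps : ∀ s ∈ p, s = X ∨ s = Y ∨ s = Z :=
    fun s hs => hsteps s (List.mem_of_mem_take hs)
  have hqsteps : ∀ s ∈ q, s = X ∨ s = Y ∨ s = Z :=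
    fun s hs => hsteps s (List.mem_of_mem_drop hs)
  have hplen : p.length = j := by
    rw [hpdef, List.length_take]
    omega
  have hpe : (endPt p).2 = (endPt p).1 := by
    have h0 : (endPt p).2 - (endPt p).1 = 0 := hjoff
    omega
  set a := (endPt p).1 with hadef
  have hpend : endPt p = (a, a) := by
    rw [Prod.ext_iff]
    exact ⟨rfl, hpe⟩
  have hqend : endPt q = ((n : ℤ) - a, (n : ℤ) - a) := by
    have h2 := endPt_append p q
    rw [hpq, he, hpend] at h2
    rw [Prod.ext_iff] at h2 ⊢
    simp at h2 ⊢
    omega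
  have hqnn := endPt_nonneg hqsteps
  rw [hqend] at hqnn
  have hplenle := length_le hpsteps
  rw [hpend] at hplenle
  have ha1 : 1 ≤ a := by
    simp at hplenle
    rw [hplen] at hplenle
    omega
  have han : a ≤ n := by
    obtain ⟨h1, _⟩ := hqnn
    omega
  refine ⟨a.toNat, ?_, p, q, ⟨hvp, ?_, ?_, ?_⟩, ⟨hvq, ?_⟩, hpq⟩
  · rw [Finset.mem_Icc]
    omega
  · rw [Int.toNat_of_nonneg (by omega)]
    exact hpend
  · rw [← List.length_pos_iff, hplen]
    exact hjpos
  · intro m hm hmlen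
    have hmj : m < j := by rwa [hplen] at hmlen
    have := Nat.find_min hJ hmj
    push_neg at this
    have hmle : m ≤ l.length := by omega
    have htt : p.take m = l.take m := by
      rw [hpdef, List.take_take, min_eq_left (le_of_lt hmj)]
    rw [htt]
    exact this hm hmle
  · rw [Int.toNat_of_nonneg (by omega)]
    exact hqend

end CS
namespace CS

lemma ncard_biUnion_finset {α : Type*} (t : Finset ℕ) (F : ℕ → Set α)
    (hfin : ∀ k ∈ t, (F k).Finite)
    (hdisj : ∀ k1 ∈ t, ∀ k2 ∈ t, k1 ≠ k2 → Disjoint (F k1) (F k2)) :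
    (⋃ k ∈ t, F k).ncard = ∑ k ∈ t, (F k).ncard := by
  classical
  induction t using Finset.induction with
  | empty => simp
  | @insert a s ha ih =>
    have hfin' : ∀ k ∈ s, (F k).Finite := fun k hk => hfin k (Finset.mem_insert_of_mem hk)
    have hrest : (⋃ k ∈ s, F k).Finite := Set.Finite.biUnion s.finite_toSet hfin'
    have hdisj2 : Disjoint (F a) (⋃ k ∈ s, F k) := by
      rw [Set.disjoint_iUnion_right]
      intro k
      rw [Set.disjoint_iUnion_right]
      intro hk
      exact hdisj a (Finset.mem_insert_self a s) k (Finset.mem_insert_of_mem hk)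
        (fun h => ha (h ▸ hk))
    rw [Finset.set_biUnion_insert, Finset.sum_insert ha,
      Set.ncard_union_eq hdisj2 (hfin a (Finset.mem_insert_self a s)) hrest,
      ih hfin' (fun k1 h1 k2 h2 h12 => hdisj k1 (Finset.mem_insert_of_mem h1) k2
        (Finset.mem_insert_of_mem h2) h12)]

lemma ncard_prod {α β : Type*} (A : Set α) (B : Set β) :
    (A ×ˢ B).ncard = A.ncard * B.ncard := by
  rw [← Nat.card_coe_set_eq, ← Nat.card_coe_set_eq, ← Nat.card_coe_set_eq,
    Nat.card_congr (Equiv.Set.prod A B), Nat.card_prod]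

/-- The first-return counting identity, for any step-allowance rule. -/
lemma firstReturn {allow : ℤ → ℤ × ℤ → Prop}
    (hst : ∀ d s, allow d s → s = X ∨ s = Y ∨ s = Z) {n : ℕ} (hn : 1 ≤ n) :
    (PSet allow (n : ℤ) (n : ℤ)).ncard =
      ∑ k ∈ Finset.Icc 1 n,
        (PrimSet allow (k : ℤ)).ncard * (PSet allow ((n : ℤ) - k) ((n : ℤ) - k)).ncard := by
  classical
  set F : ℕ → Set (List (ℤ × ℤ)) := fun k =>
    (fun pq : List (ℤ × ℤ) × List (ℤ × ℤ) => pq.1 ++ pq.2) ''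
      ((PrimSet allow (k : ℤ)) ×ˢ (PSet allow ((n : ℤ) - k) ((n : ℤ) - k))) with hF
  have hunion : PSet allow (n : ℤ) (n : ℤ) = ⋃ k ∈ Finset.Icc 1 n, F k := by
    ext l
    simp only [Set.mem_iUnion, hF, Set.mem_image, Set.mem_prod, Prod.exists]
    constructor
    · intro hl
      obtain ⟨k, hk, p, q, hp, hq, hpq⟩ := exists_prim_decomp hst hn hl
      exact ⟨k, hk, p, q, ⟨hp, hq⟩, hpq⟩
    · rintro ⟨k, hk, p, q, ⟨hp, hq⟩, rfl⟩
      constructor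
      · rw [valid_append, off_of_endPt_diag hp.2.1]
        exact ⟨hp.1, by simpa using hq.1⟩
      · rw [endPt_append, hp.2.1, hq.2, Prod.ext_iff]
        constructor <;> simp <;> ring
  have hfin : ∀ k ∈ Finset.Icc 1 n, (F k).Finite := by
    intro k _
    exact (((PrimSet_finite hst _).prod (PSet_finite hst _ _)).image _)
  have hdisj : ∀ k1 ∈ Finset.Icc 1 n, ∀ k2 ∈ Finset.Icc 1 n, k1 ≠ k2 → Disjoint (F k1) (F k2) := by
    intro k1 _ k2 _ h12
    rw [Set.disjoint_left]
    rintro l ⟨⟨p1, q1⟩, ⟨hp1, _⟩, h1⟩ ⟨⟨p2, q2⟩, ⟨hp2, _⟩, h2⟩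
    have h3 : p1 ++ q1 = p2 ++ q2 := by simp only [] at h1 h2; rw [h1, h2]
    have := (prim_append_eq hp1 hp2 h3).1
    apply h12
    have h4 : ((k1 : ℤ), (k1 : ℤ)) = ((k2 : ℤ), (k2 : ℤ)) := by
      rw [← hp1.2.1, ← hp2.2.1, this]
    simp [Prod.ext_iff] at h4
    exact_mod_cast h4
  rw [hunion, ncard_biUnion_finset _ _ hfin hdisj]
  apply Finset.sum_congr rfl
  intro k _
  rw [hF]
  have hinj : Set.InjOn (fun pq : List (ℤ × ℤ) × List (ℤ × ℤ) => pq.1 ++ pq.2)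
      ((PrimSet allow (k : ℤ)) ×ˢ (PSet allow ((n : ℤ) - k) ((n : ℤ) - k))) := by
    rintro ⟨p1, q1⟩ ⟨hp1, _⟩ ⟨p2, q2⟩ ⟨hp2, _⟩ h
    obtain ⟨h1, h2⟩ := prim_append_eq hp1 hp2 h
    rw [Prod.ext_iff]
    exact ⟨h1, h2⟩
  rw [Set.ncard_image_of_injOn hinj, ncard_prod]

end CS
namespace CS

@[simp] lemma off_singleton (s : ℤ × ℤ) : off [s] = dOff s := by
  simp [off, endPt, dOff]

@[simp] lemma dOff_X : dOff X = -1 := rfl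
@[simp] lemma dOff_Y : dOff Y = 1 := rfl
@[simp] lemma dOff_Z : dOff Z = 0 := rfl

lemma off_take_succ (l : List (ℤ × ℤ)) (m : ℕ) (h : m < l.length) :
    off (l.take (m + 1)) = off (l.take m) + dOff l[m] := by
  rw [List.take_succ, off_append]
  congr 1
  have : l[m]? = some l[m] := List.getElem?_eq_getElem h
  rw [this]
  simp

/-- Validity is the pointwise allowance of each step at its recorded offset. -/
lemma offsets_of_valid {a : ℤ → ℤ × ℤ → Prop} :
    ∀ (l : List (ℤ × ℤ)) (d : ℤ), valid a d l →
      ∀ (m : ℕ) (hm : m < l.length), a (d + off (l.take m)) l[m] := by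
  intro l
  induction l with
  | nil => intro d _ m hm; simp at hm
  | cons s t ih =>
    intro d hv m hm
    cases m with
    | zero => simpa using hv.1
    | succ m =>
      have hm' : m < t.length := by simpa using hm
      have := ih (d + dOff s) hv.2 m hm'
      simpa [List.take_cons, off_cons, add_assoc] using this

lemma valid_of_offsets {a : ℤ → ℤ × ℤ → Prop} :
    ∀ (l : List (ℤ × ℤ)) (d : ℤ),
      (∀ (m : ℕ) (hm : m < l.length), a (d + off (l.take m)) l[m]) → valid a d l := by
  intro l
  induction l with
  | nil => intro d _; trivial
  | cons s t ih =>
    intro d h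
    constructor
    · have := h 0 (by simp)
      simp only [List.take_zero, off_nil, add_zero, List.getElem_cons_zero] at this
      exact this
    · apply ih
      intro m hm
      have := h (m + 1) (by simpa using hm)
      simpa [List.take_cons, off_cons, add_assoc] using this

/-- The allowance rules. -/
def allowF : ℤ → ℤ × ℤ → Prop := fun d s => s = X ∨ s = Y ∨ (s = Z ∧ 0 < d)
def allowC : ℤ → ℤ × ℤ → Prop := fun d s => s = X ∨ (s = Y ∧ d < 0)
def allowS : ℤ → ℤ × ℤ → Prop := fun d s => s = Y ∨ s = Z ∨ (s = X ∧ 0 < d)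

lemma allowF_steps : ∀ d s, allowF d s → s = X ∨ s = Y ∨ s = Z := by
  intro d s h; rcases h with h | h | h <;> tauto
lemma allowC_steps : ∀ d s, allowC d s → s = X ∨ s = Y ∨ s = Z := by
  intro d s h; rcases h with h | h <;> tauto
lemma allowS_steps : ∀ d s, allowS d s → s = X ∨ s = Y ∨ s = Z := by
  intro d s h; rcases h with h | h | h <;> tauto

/-- Catalan-type paths stay weakly below their starting level. -/
lemma allowC_take_nonpos :
    ∀ (l : List (ℤ × ℤ)) (d : ℤ), valid allowC d l → d ≤ 0 →
      ∀ m : ℕ, d + off (l.take m) ≤ 0 := by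
  intro l
  induction l with
  | nil => intro d _ hd m; simp [hd]
  | cons s t ih =>
    intro d hv hd m
    cases m with
    | zero => simpa using hd
    | succ m =>
      have hstep : d + dOff s ≤ 0 := by
        rcases hv.1 with h | ⟨h, hlt⟩ <;> subst h <;> norm_num [dOff] <;> omega
      have := ih (d + dOff s) hv.2 hstep m
      rw [List.take_succ_cons, off_cons]
      omega

/-- Schröder-type (weakly above) paths stay weakly above their starting level. -/
lemma allowS_take_nonneg :
    ∀ (l : List (ℤ × ℤ)) (d : ℤ), valid allowS d l → 0 ≤ d →
      ∀ m : ℕ, 0 ≤ d + off (l.take m) := by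
  intro l
  induction l with
  | nil => intro d _ hd m; simp [hd]
  | cons s t ih =>
    intro d hv hd m
    cases m with
    | zero => simpa using hd
    | succ m =>
      have hstep : 0 ≤ d + dOff s := by
        rcases hv.1 with h | h | ⟨h, hlt⟩ <;> subst h <;> norm_num [dOff] <;> omega
      have := ih (d + dOff s) hv.2 hstep m
      rw [List.take_succ_cons, off_cons]
      omega

/-- Interior offsets of a primitive path starting downwards stay `≤ -1`. -/
lemma interior_neg {l : List (ℤ × ℤ)} (hsteps : ∀ s ∈ l, s = X ∨ s = Y ∨ s = Z)
    (h1 : off (l.take 1) = -1)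
    (hprim : ∀ m : ℕ, 0 < m → m < l.length → off (l.take m) ≠ 0) :
    ∀ m : ℕ, 1 ≤ m → m < l.length → off (l.take m) ≤ -1 := by
  intro m
  induction m with
  | zero => omega
  | succ m ih =>
    intro _ hlt
    by_cases hm0 : m = 0
    · subst hm0; simp only [Nat.zero_add]; omega
    · have hm1 : 1 ≤ m := by omega
      have hmlt : m < l.length := by omega
      have hih := ih hm1 hmlt
      have hstep := off_take_succ l m hmlt
      have hmem := List.getElem_mem (l := l) (n := m) hmlt
      have hd : dOff l[m] ≤ 1 := by
        rcases hsteps _ hmem with h | h | h <;> rw [h] <;> norm_num [dOff]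
      have hne := hprim (m + 1) (by omega) hlt
      omega

/-- Interior offsets of a primitive path starting upwards stay `≥ 1`. -/
lemma interior_pos {l : List (ℤ × ℤ)} (hsteps : ∀ s ∈ l, s = X ∨ s = Y ∨ s = Z)
    (h1 : off (l.take 1) = 1)
    (hprim : ∀ m : ℕ, 0 < m → m < l.length → off (l.take m) ≠ 0) :
    ∀ m : ℕ, 1 ≤ m → m < l.length → 1 ≤ off (l.take m) := by
  intro m
  induction m with
  | zero => omega
  | succ m ih =>
    intro _ hlt
    by_cases hm0 : m = 0
    · subst hm0; simp only [Nat.zero_add]; omega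
    · have hm1 : 1 ≤ m := by omega
      have hmlt : m < l.length := by omega
      have hih := ih hm1 hmlt
      have hstep := off_take_succ l m hmlt
      have hmem := List.getElem_mem (l := l) (n := m) hmlt
      have hd : -1 ≤ dOff l[m] := by
        rcases hsteps _ hmem with h | h | h <;> rw [h] <;> norm_num [dOff]
      have hne := hprim (m + 1) (by omega) hlt
      omega

end CS
namespace CS

lemma endPt_single (s : ℤ × ℤ) : endPt [s] = s := by simp [endPt]

lemma take_cons_append {x b : ℤ × ℤ} {A : List (ℤ × ℤ)} {m : ℕ} (h : m ≤ A.length) :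
    (x :: (A ++ [b])).take (m + 1) = x :: A.take m := by
  rw [List.take_succ_cons, List.take_append_of_le_length h]

lemma getElem_cons_append {x b : ℤ × ℤ} {A : List (ℤ × ℤ)} {m : ℕ} (h : m < A.length) :
    (x :: (A ++ [b]))[m + 1]'(by simp; omega) = A[m] := by
  rw [List.getElem_cons_succ, List.getElem_append_left h]

lemma length_cons_append (x b : ℤ × ℤ) (A : List (ℤ × ℤ)) :
    (x :: (A ++ [b])).length = A.length + 2 := by simp

lemma off_cons_append (x b : ℤ × ℤ) (A : List (ℤ × ℤ)) :
    off (x :: (A ++ [b])) = dOff x + off A + dOff b := by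
  rw [off_cons, off_append, off_singleton]; ring

lemma endPt_cons_append (x b : ℤ × ℤ) (A : List (ℤ × ℤ)) :
    endPt (x :: (A ++ [b])) =
      (x.1 + (endPt A).1 + b.1, x.2 + (endPt A).2 + b.2) := by
  rw [endPt_cons, endPt_append, endPt_single]
  simp [add_assoc]

lemma belowStrip {allow : ℤ → ℤ × ℤ → Prop}
    (hst : ∀ d s, allow d s → s = X ∨ s = Y ∨ s = Z)
    (hX : ∀ d, allow d X) (hY : ∀ d, d < 0 → allow d Y)
    (hZ : ∀ d, d ≤ -1 → ¬ allow d Z) (k : ℤ) :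
    {l | l ∈ PrimSet allow k ∧ l.head? = some X}
      = (fun A => X :: (A ++ [Y])) '' PSet allowC (k - 1) (k - 1) := by
  ext l
  constructor
  · rintro ⟨⟨hv, he, hne, hprim⟩, hhead⟩
    cases l with
    | nil => simp at hhead
    | cons s t =>
      simp only [List.head?_cons, Option.some.injEq] at hhead
      subst hhead
      have hsteps := valid_steps hst _ _ hv
      have ht : t ≠ [] := by
        rintro rfl
        rw [endPt_single] at he
        rw [Prod.ext_iff] at he
        simp at he
        omega
      obtain ⟨A, b, rfl⟩ : ∃ A b, t = A ++ [b] :=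
        ⟨t.dropLast, t.getLast ht, (List.dropLast_append_getLast ht).symm⟩
      have hlen := length_cons_append X b A
      have htk1 : off ((X :: (A ++ [b])).take 1) = -1 := by
        rw [show (1 : ℕ) = 0 + 1 from rfl, take_cons_append (Nat.zero_le _)]
        simp [off_cons]
      have hint := interior_neg hsteps htk1 hprim
      have hintA := hint (A.length + 1) (by omega) (by omega)
      rw [take_cons_append (le_refl A.length), List.take_length, off_cons, dOff_X] at hintA
      have hoffA : off A ≤ 0 := by omega
      have hoffl : off (X :: (A ++ [b])) = 0 := off_of_endPt_diag he
      rw [off_cons_append, dOff_X] at hoffl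
      have hbmem : b ∈ X :: (A ++ [b]) := by simp
      have hbY : b = Y ∧ off A = 0 := by
        rcases hsteps b hbmem with h | h | h <;> rw [h] at hoffl <;> simp [dOff] at hoffl <;>
          first
            | (exfalso; omega)
            | exact ⟨h, by omega⟩
      obtain ⟨rfl, hA0⟩ := hbY
      refine ⟨A, ⟨?_, ?_⟩, rfl⟩
      · -- validity of A as a Catalan path
        apply valid_of_offsets
        intro m hm
        have hOff : off ((X :: (A ++ [Y])).take (m + 1)) = -1 + off (A.take m) := by
          rw [take_cons_append (le_of_lt hm), off_cons, dOff_X]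
        have hget : (X :: (A ++ [Y]))[m + 1]'(by simp; omega) = A[m] := getElem_cons_append hm
        have hpt := offsets_of_valid _ 0 hv (m + 1) (by simp; omega)
        rw [hOff, hget] at hpt
        have hOm : off (A.take m) ≤ 0 := by
          have := hint (m + 1) (by omega) (by omega)
          rw [hOff] at this
          omega
        have hAmem : A[m] ∈ X :: (A ++ [Y]) := by
          have : A[m] ∈ A := List.getElem_mem hm
          simp [this]
        rcases hsteps _ hAmem with h | h | h
        · exact Or.inl h
        · -- Y step : landing must be interior and ≤ -1
          refine Or.inr ⟨h, ?_⟩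
          have hstep2 := off_take_succ (X :: (A ++ [Y])) (m + 1) (by omega)
          rw [hOff, hget, h, dOff_Y] at hstep2
          have hland := hint (m + 2) (by omega) (by omega)
          rw [hstep2] at hland
          omega
        · exfalso
          rw [h] at hpt
          exact hZ _ (by omega) hpt
      · -- endpoint of A
        rw [endPt_cons_append] at he
        rw [Prod.ext_iff] at he ⊢
        simp at he ⊢
        omega
  · rintro ⟨A, ⟨hvA, heA⟩, rfl⟩
    have hA0 : off A = 0 := off_of_endPt_diag heA
    have hAnp := allowC_take_nonpos A 0 hvA (le_refl 0)
    simp only [zero_add] at hAnp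
    refine ⟨⟨?_, ?_, by simp, ?_⟩, by simp⟩
    · -- validity
      rw [valid_cons]
      refine ⟨hX 0, ?_⟩
      rw [dOff_X, valid_append]
      constructor
      · apply valid_of_offsets
        intro m hm
        have := offsets_of_valid A 0 hvA m hm
        simp only [zero_add] at this
        rcases this with h | ⟨h, hlt⟩
        · rw [h]; exact hX _
        · rw [h]; exact hY _ (by omega)
      · rw [hA0]
        rw [valid_cons]
        exact ⟨hY _ (by norm_num), trivial⟩
    · -- endpoint
      rw [endPt_cons_append, heA]
      rw [Prod.ext_iff]
      norm_num
    · -- primitivity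
      intro m hm hmlt
      rw [length_cons_append] at hmlt
      obtain ⟨m', rfl⟩ : ∃ m', m = m' + 1 := ⟨m - 1, by omega⟩
      rw [take_cons_append (by omega), off_cons, dOff_X]
      have := hAnp m'
      omega

lemma aboveStrip {allow : ℤ → ℤ × ℤ → Prop}
    (hst : ∀ d s, allow d s → s = X ∨ s = Y ∨ s = Z)
    (hY : ∀ d, allow d Y) (hZpos : ∀ d, 0 < d → allow d Z)
    (hXpos : ∀ d, 0 < d → allow d X) (k : ℤ) :
    {l | l ∈ PrimSet allow k ∧ l.head? = some Y}
      = (fun A => Y :: (A ++ [X])) '' PSet allowS (k - 1) (k - 1) := by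
  ext l
  constructor
  · rintro ⟨⟨hv, he, hne, hprim⟩, hhead⟩
    cases l with
    | nil => simp at hhead
    | cons s t =>
      simp only [List.head?_cons, Option.some.injEq] at hhead
      subst hhead
      have hsteps := valid_steps hst _ _ hv
      have ht : t ≠ [] := by
        rintro rfl
        rw [endPt_single] at he
        rw [Prod.ext_iff] at he
        simp at he
        omega
      obtain ⟨A, b, rfl⟩ : ∃ A b, t = A ++ [b] :=
        ⟨t.dropLast, t.getLast ht, (List.dropLast_append_getLast ht).symm⟩
      have hlen := length_cons_append Y b A
      have htk1 : off ((Y :: (A ++ [b])).take 1) = 1 := by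
        rw [show (1 : ℕ) = 0 + 1 from rfl, take_cons_append (Nat.zero_le _)]
        simp [off_cons]
      have hint := interior_pos hsteps htk1 hprim
      have hintA := hint (A.length + 1) (by omega) (by omega)
      rw [take_cons_append (le_refl A.length), List.take_length, off_cons, dOff_Y] at hintA
      have hoffA : 0 ≤ off A := by omega
      have hoffl : off (Y :: (A ++ [b])) = 0 := off_of_endPt_diag he
      rw [off_cons_append, dOff_Y] at hoffl
      have hbmem : b ∈ Y :: (A ++ [b]) := by simp
      have hbX : b = X ∧ off A = 0 := by
        rcases hsteps b hbmem with h | h | h <;> rw [h] at hoffl <;> simp [dOff] at hoffl <;>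
          first
            | (exfalso; omega)
            | exact ⟨h, by omega⟩
      obtain ⟨rfl, hA0⟩ := hbX
      refine ⟨A, ⟨?_, ?_⟩, rfl⟩
      · apply valid_of_offsets
        intro m hm
        have hOff : off ((Y :: (A ++ [X])).take (m + 1)) = 1 + off (A.take m) := by
          rw [take_cons_append (le_of_lt hm), off_cons, dOff_Y]
        have hget : (Y :: (A ++ [X]))[m + 1]'(by simp; omega) = A[m] := getElem_cons_append hm
        have hAmem : A[m] ∈ Y :: (A ++ [X]) := by
          have : A[m] ∈ A := List.getElem_mem hm
          simp [this]
        rcases hsteps _ hAmem with h | h | h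
        · -- X step : landing must be interior and ≥ 1
          refine Or.inr (Or.inr ⟨h, ?_⟩)
          have hstep2 := off_take_succ (Y :: (A ++ [X])) (m + 1) (by omega)
          rw [hOff, hget, h, dOff_X] at hstep2
          have hland := hint (m + 2) (by omega) (by omega)
          rw [hstep2] at hland
          omega
        · exact Or.inl h
        · exact Or.inr (Or.inl h)
      · rw [endPt_cons_append] at he
        rw [Prod.ext_iff] at he ⊢
        simp at he ⊢
        omega
  · rintro ⟨A, ⟨hvA, heA⟩, rfl⟩
    have hA0 : off A = 0 := off_of_endPt_diag heA
    have hAnn := allowS_take_nonneg A 0 hvA (le_refl 0)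
    simp only [zero_add] at hAnn
    refine ⟨⟨?_, ?_, by simp, ?_⟩, by simp⟩
    · rw [valid_cons]
      refine ⟨hY 0, ?_⟩
      rw [dOff_Y, valid_append]
      constructor
      · apply valid_of_offsets
        intro m hm
        have := offsets_of_valid A 0 hvA m hm
        simp only [zero_add] at this
        have hnn := hAnn m
        rcases this with h | h | ⟨h, hlt⟩
        · rw [h]; exact hY _
        · rw [h]; exact hZpos _ (by omega)
        · rw [h]; exact hXpos _ (by omega)
      · rw [hA0]
        rw [valid_cons]
        exact ⟨hXpos _ (by norm_num), trivial⟩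
    · rw [endPt_cons_append, heA]
      rw [Prod.ext_iff]
      norm_num
    · intro m hm hmlt
      rw [length_cons_append] at hmlt
      obtain ⟨m', rfl⟩ : ∃ m', m = m' + 1 := ⟨m - 1, by omega⟩
      rw [take_cons_append (by omega), off_cons, dOff_Y]
      have := hAnn m'
      omega

end CS
namespace CS

lemma injXY : Function.Injective (fun A : List (ℤ × ℤ) => X :: (A ++ [Y])) := by
  intro A B h
  simpa using h

lemma injYX : Function.Injective (fun A : List (ℤ × ℤ) => Y :: (A ++ [X])) := by
  intro A B h
  simpa using h

lemma primC_card (k : ℤ) :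
    (PrimSet allowC k).ncard = (PSet allowC (k - 1) (k - 1)).ncard := by
  have hsplit : PrimSet allowC k = {l | l ∈ PrimSet allowC k ∧ l.head? = some X} := by
    ext l
    constructor
    · intro hl
      refine ⟨hl, ?_⟩
      obtain ⟨hv, he, hne, hprim⟩ := hl
      cases l with
      | nil => exact absurd rfl hne
      | cons s t =>
        rcases hv.1 with h | ⟨h, hlt⟩
        · rw [h]; rfl
        · exfalso; omega
    · exact fun h => h.1
  rw [hsplit, belowStrip allowC_steps (fun d => Or.inl rfl)
    (fun d hd => Or.inr ⟨rfl, hd⟩) (fun d _ h => by rcases h with h | ⟨h, _⟩ <;> simp [X, Y, Z, Prod.ext_iff] at h) k,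
    Set.ncard_image_of_injective _ injXY]

lemma primS_card (k : ℤ) :
    (PrimSet allowS k).ncard =
      (if k = 1 then 1 else 0) + (PSet allowS (k - 1) (k - 1)).ncard := by
  have hZpart : {l | l ∈ PrimSet allowS k ∧ l.head? = some Z} =
      if k = 1 then {[Z]} else (∅ : Set (List (ℤ × ℤ))) := by
    ext l
    constructor
    · rintro ⟨⟨hv, he, hne, hprim⟩, hhead⟩
      cases l with
      | nil => simp at hhead
      | cons s t =>
        simp only [List.head?_cons, Option.some.injEq] at hhead
        subst hhead
        have ht : t = [] := by
          by_contra ht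
          have hlen : 1 < (Z :: t).length := by
            simp only [List.length_cons]
            have := List.length_pos_iff.2 ht
            omega
          have := hprim 1 (by omega) hlen
          apply this
          rw [show (Z :: t).take 1 = [Z] from rfl, off_singleton, dOff_Z]
        subst ht
        rw [endPt_single, Prod.ext_iff] at he
        simp at he
        have hk : k = 1 := by omega
        simp [hk]
    · intro hl
      by_cases hk : k = 1
      · subst hk
        rw [if_pos rfl, Set.mem_singleton_iff] at hl
        subst hl
        refine ⟨⟨⟨Or.inr (Or.inl rfl), trivial⟩, by rw [endPt_single], by simp, ?_⟩, rfl⟩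
        intro m hm hmlt
        rw [show ([Z] : List (ℤ × ℤ)).length = 1 from rfl] at hmlt
        omega
      · rw [if_neg hk] at hl
        exact absurd hl (Set.notMem_empty l)
  have hsplit : PrimSet allowS k =
      {l | l ∈ PrimSet allowS k ∧ l.head? = some Z} ∪
      {l | l ∈ PrimSet allowS k ∧ l.head? = some Y} := by
    ext l
    constructor
    · intro hl
      obtain ⟨hv, he, hne, hprim⟩ := hl
      cases l with
      | nil => exact absurd rfl hne
      | cons s t =>
        rcases hv.1 with h | h | ⟨h, hlt⟩
        · right; exact ⟨⟨hv, he, hne, hprim⟩, by rw [h]; rfl⟩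
        · left; exact ⟨⟨hv, he, hne, hprim⟩, by rw [h]; rfl⟩
        · exfalso; omega
    · rintro (h | h) <;> exact h.1
  have hdisj : Disjoint {l | l ∈ PrimSet allowS k ∧ l.head? = some Z}
      {l | l ∈ PrimSet allowS k ∧ l.head? = some Y} := by
    rw [Set.disjoint_left]
    rintro l ⟨_, h1⟩ ⟨_, h2⟩
    rw [h1] at h2
    simp [Z, Y, Prod.ext_iff] at h2
  have hfin1 : {l | l ∈ PrimSet allowS k ∧ l.head? = some Z}.Finite :=
    (PrimSet_finite allowS_steps k).subset (fun l h => h.1)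
  have hfin2 : {l | l ∈ PrimSet allowS k ∧ l.head? = some Y}.Finite :=
    (PrimSet_finite allowS_steps k).subset (fun l h => h.1)
  rw [hsplit, Set.ncard_union_eq hdisj hfin1 hfin2, hZpart,
    aboveStrip allowS_steps (fun d => Or.inl rfl) (fun d _ => Or.inr (Or.inl rfl))
      (fun d hd => Or.inr (Or.inr ⟨rfl, hd⟩)) k,
    Set.ncard_image_of_injective _ injYX]
  congr 1
  by_cases hk : k = 1 <;> simp [hk]

lemma primF_card (k : ℤ) :
    (PrimSet allowF k).ncard =
      (PSet allowC (k - 1) (k - 1)).ncard + (PSet allowS (k - 1) (k - 1)).ncard := by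
  have hsplit : PrimSet allowF k =
      {l | l ∈ PrimSet allowF k ∧ l.head? = some X} ∪
      {l | l ∈ PrimSet allowF k ∧ l.head? = some Y} := by
    ext l
    constructor
    · intro hl
      obtain ⟨hv, he, hne, hprim⟩ := hl
      cases l with
      | nil => exact absurd rfl hne
      | cons s t =>
        rcases hv.1 with h | h | ⟨h, hlt⟩
        · left; exact ⟨⟨hv, he, hne, hprim⟩, by rw [h]; rfl⟩
        · right; exact ⟨⟨hv, he, hne, hprim⟩, by rw [h]; rfl⟩
        · exfalso; omega
    · rintro (h | h) <;> exact h.1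
  have hdisj : Disjoint {l | l ∈ PrimSet allowF k ∧ l.head? = some X}
      {l | l ∈ PrimSet allowF k ∧ l.head? = some Y} := by
    rw [Set.disjoint_left]
    rintro l ⟨_, h1⟩ ⟨_, h2⟩
    rw [h1] at h2
    simp [X, Y, Prod.ext_iff] at h2
  have hfin1 : {l | l ∈ PrimSet allowF k ∧ l.head? = some X}.Finite :=
    (PrimSet_finite allowF_steps k).subset (fun l h => h.1)
  have hfin2 : {l | l ∈ PrimSet allowF k ∧ l.head? = some Y}.Finite :=
    (PrimSet_finite allowF_steps k).subset (fun l h => h.1)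
  rw [hsplit, Set.ncard_union_eq hdisj hfin1 hfin2,
    belowStrip allowF_steps (fun d => Or.inl rfl) (fun d _ => Or.inr (Or.inl rfl))
      (fun d hd h => by
        rcases h with h | h | ⟨_, hlt⟩
        · simp [X, Z, Prod.ext_iff] at h
        · simp [Y, Z, Prod.ext_iff] at h
        · omega) k,
    aboveStrip allowF_steps (fun d => Or.inr (Or.inl rfl)) (fun d hd => Or.inr (Or.inr ⟨rfl, hd⟩))
      (fun d _ => Or.inl rfl) k,
    Set.ncard_image_of_injective _ injXY, Set.ncard_image_of_injective _ injYX]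

end CS
namespace CS

noncomputable def dy (m : ℕ) : ℕ := (PSet allowC (m : ℤ) (m : ℤ)).ncard
noncomputable def sa (m : ℕ) : ℕ := (PSet allowS (m : ℤ) (m : ℤ)).ncard
noncomputable def ff (m : ℕ) : ℕ := (PSet allowF (m : ℤ) (m : ℤ)).ncard

lemma dy_zero : dy 0 = 1 := by
  unfold dy
  rw [Nat.cast_zero, PSet_zero allowC_steps, Set.ncard_singleton]

lemma sa_zero : sa 0 = 1 := by
  unfold sa
  rw [Nat.cast_zero, PSet_zero allowS_steps, Set.ncard_singleton]

lemma ff_zero : ff 0 = 1 := by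
  unfold ff
  rw [Nat.cast_zero, PSet_zero allowF_steps, Set.ncard_singleton]

lemma dy_rec {n : ℕ} (hn : 1 ≤ n) :
    dy n = ∑ k ∈ Finset.Icc 1 n, dy (k - 1) * dy (n - k) := by
  unfold dy
  rw [firstReturn allowC_steps hn]
  apply Finset.sum_congr rfl
  intro k hk
  rw [Finset.mem_Icc] at hk
  rw [primC_card]
  have h1 : (k : ℤ) - 1 = ((k - 1 : ℕ) : ℤ) := by omega
  have h2 : (n : ℤ) - k = ((n - k : ℕ) : ℤ) := by omega
  rw [h1, h2]

lemma sa_rec {n : ℕ} (hn : 1 ≤ n) :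
    sa n = ∑ k ∈ Finset.Icc 1 n,
      ((if k = 1 then 1 else 0) + sa (k - 1)) * sa (n - k) := by
  unfold sa
  rw [firstReturn allowS_steps hn]
  apply Finset.sum_congr rfl
  intro k hk
  rw [Finset.mem_Icc] at hk
  rw [primS_card]
  have h1 : (k : ℤ) - 1 = ((k - 1 : ℕ) : ℤ) := by omega
  have h2 : (n : ℤ) - k = ((n - k : ℕ) : ℤ) := by omega
  have hif : (if (k : ℤ) = 1 then 1 else 0) = (if k = 1 then 1 else 0) := by
    by_cases h : k = 1
    · simp [h]
    · simp [h, show (k : ℤ) ≠ 1 by omega]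
  rw [h1, h2, hif]

lemma ff_rec {n : ℕ} (hn : 1 ≤ n) :
    ff n = ∑ k ∈ Finset.Icc 1 n, (dy (k - 1) + sa (k - 1)) * ff (n - k) := by
  unfold ff dy sa
  rw [firstReturn allowF_steps hn]
  apply Finset.sum_congr rfl
  intro k hk
  rw [Finset.mem_Icc] at hk
  rw [primF_card]
  have h1 : (k : ℤ) - 1 = ((k - 1 : ℕ) : ℤ) := by omega
  have h2 : (n : ℤ) - k = ((n - k : ℕ) : ℤ) := by omega
  rw [h1, h2]

lemma dy_eq_catalan : ∀ n : ℕ, dy n = catalan n := by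
  intro n
  induction n using Nat.strong_induction_on with
  | _ n ih =>
    match n with
    | 0 => rw [dy_zero, catalan_zero]
    | (m + 1) =>
      rw [dy_rec (Nat.succ_le_succ (Nat.zero_le m)), catalan_succ,
        Fin.sum_univ_eq_sum_range (fun i => catalan i * catalan (m - i)) (m + 1),
        ← Finset.Ico_add_one_right_eq_Icc, Finset.sum_Ico_eq_sum_range]
      have hrange : m + 1 + 1 - 1 = m + 1 := by omega
      rw [hrange]
      apply Finset.sum_congr rfl
      intro i hi
      rw [Finset.mem_range] at hi
      have e1 : 1 + i - 1 = i := by omega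
      have e2 : m + 1 - (1 + i) = m - i := by omega
      rw [e1, e2, ih i (by omega), ih (m - i) (by omega)]

lemma sa_eq_schroeder : ∀ n : ℕ, sa n = schroeder n := by
  intro n
  induction n using Nat.strong_induction_on with
  | _ n ih =>
    match n with
    | 0 => rw [sa_zero]; simp [schroeder]
    | (m + 1) =>
      rw [sa_rec (Nat.succ_le_succ (Nat.zero_le m))]
      have hexp : ∑ k ∈ Finset.Icc 1 (m + 1),
          ((if k = 1 then 1 else 0) + sa (k - 1)) * sa (m + 1 - k)
          = (∑ k ∈ Finset.Icc 1 (m + 1), (if k = 1 then 1 else 0) * sa (m + 1 - k))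
            + ∑ k ∈ Finset.Icc 1 (m + 1), sa (k - 1) * sa (m + 1 - k) := by
        rw [← Finset.sum_add_distrib]
        apply Finset.sum_congr rfl
        intro k _
        ring
      rw [hexp]
      have hfirst : (∑ k ∈ Finset.Icc 1 (m + 1), (if k = 1 then 1 else 0) * sa (m + 1 - k))
          = sa m := by
        rw [Finset.sum_eq_single_of_mem 1 (Finset.mem_Icc.2 ⟨le_refl 1, by omega⟩)]
        · simp
        · intro k _ hk
          simp [hk]
      rw [hfirst]
      have hsecond : (∑ k ∈ Finset.Icc 1 (m + 1), sa (k - 1) * sa (m + 1 - k))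
          = ∑ i ∈ Finset.range (m + 1), schroeder i * schroeder (m - i) := by
        rw [← Finset.Ico_add_one_right_eq_Icc, Finset.sum_Ico_eq_sum_range]
        have hrange : m + 1 + 1 - 1 = m + 1 := by omega
        rw [hrange]
        apply Finset.sum_congr rfl
        intro i hi
        rw [Finset.mem_range] at hi
        have e1 : 1 + i - 1 = i := by omega
        have e2 : m + 1 - (1 + i) = m - i := by omega
        rw [e1, e2, ih i (by omega), ih (m - i) (by omega)]
      rw [hsecond, ih m (by omega)]
      have hs : schroeder (m + 1)
          = schroeder m + ∑ i : Fin (m + 1), schroeder i * schroeder (m - i) := by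
        simp only [schroeder]
      rw [hs, Fin.sum_univ_eq_sum_range (fun i => schroeder i * schroeder (m - i)) (m + 1)]

lemma okFrom_iff : ∀ (l : List (ℤ × ℤ)) (a b : ℤ),
    okFrom (fun p => p.1 < p.2) (a, b) l ↔ valid allowF (b - a) l := by
  intro l
  induction l with
  | nil => intro a b; exact ⟨fun _ => trivial, fun _ => trivial⟩
  | cons s t ih =>
    intro a b
    show ((s = (1, 0) ∨ s = (0, 1) ∨ (s = (1, 1) ∧ a < b)) ∧
        okFrom (fun p => p.1 < p.2) (a + s.1, b + s.2) t) ↔ _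
    rw [valid_cons]
    have harith : b + s.2 - (a + s.1) = b - a + dOff s := by
      simp [dOff]; ring
    constructor
    · rintro ⟨h1, h2⟩
      refine ⟨?_, ?_⟩
      · rcases h1 with h | h | ⟨h, hab⟩
        · exact Or.inl h
        · exact Or.inr (Or.inl h)
        · exact Or.inr (Or.inr ⟨h, by omega⟩)
      · rw [← harith]
        exact (ih (a + s.1) (b + s.2)).1 h2
    · rintro ⟨h1, h2⟩
      refine ⟨?_, ?_⟩
      · rcases h1 with h | h | ⟨h, hab⟩
        · exact Or.inl h
        · exact Or.inr (Or.inl h)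
        · exact Or.inr (Or.inr ⟨h, by omega⟩)
      · apply (ih (a + s.1) (b + s.2)).2
        rw [harith]
        exact h2

lemma LCSstar_eq_PSet (n k : ℕ) : LCSstar n k = PSet allowF (n : ℤ) (k : ℤ) := by
  ext l
  show (okFrom (fun p => p.1 < p.2) (0, 0) l ∧ endPt l = ((n : ℤ), (k : ℤ)))
    ↔ (valid allowF 0 l ∧ endPt l = ((n : ℤ), (k : ℤ)))
  rw [okFrom_iff l 0 0]
  norm_num

lemma fCSstar_eq_ff (n : ℕ) : fCSstar n = ff n := by
  unfold fCSstar ff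
  rw [Nat.card_coe_set_eq, LCSstar_eq_PSet]

end CS

/-- f*_0 = 1 and, for n ≥ 1, f*_n = Σ_{k=1}^{n} (C_{k-1}+S_{k-1})·f*_{n-k}. -/
theorem fCSstar_recurrence :
    fCSstar 0 = 1 ∧ ∀ n : ℕ, 1 ≤ n →
      fCSstar n = ∑ k ∈ Finset.Icc 1 n,
        (catalan (k - 1) + schroeder (k - 1)) * fCSstar (n - k) := by
  constructor
  · rw [CS.fCSstar_eq_ff, CS.ff_zero]
  · intro n hn
    rw [CS.fCSstar_eq_ff, CS.ff_rec hn]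
    apply Finset.sum_congr rfl
    intro k _
    rw [CS.dy_eq_catalan, CS.sa_eq_schroeder, CS.fCSstar_eq_ff]
end
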